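/- arXiv:1710.06672 — 3 statements merged into one kernel-verified Lean document; each statement's English description precedes it below -/
import Mathlib

section
/- (Sharp estimate on the saddle intervals.) Assume q ≥ 1. For every x ∈ ℱ, π_ε(x) = ( G₀(x) + √ε·G₁(x) + o(√ε) )·e^{−V̂(x)/ε}, i.e. lim_{ε→0} ε^{−1/2}( e^{V̂(x)/ε}·π_ε(x) − G₀(x) − √ε·G₁(x) ) = 0; and for every x ∈ 𝒢, π_ε(x) = (1+o(1))·ε·G₂(x)·e^{−V̂(x)/ε}, i.e. lim_{ε→0} e^{V̂(x)/ε}·π_ε(x)/(ε·G₂(x)) = 1. -/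
open Filter MeasureTheory Set Real

lemma exp_decay_div {c : ℝ} (hc : 0 < c) :
    Filter.Tendsto (fun ε : ℝ => Real.exp (-(c/ε)) / ε) (nhdsWithin 0 (Set.Ioi 0)) (nhds 0) := by
  have h1 : Tendsto (fun ε : ℝ => c / ε) (nhdsWithin 0 (Set.Ioi 0)) atTop := by
    simpa [div_eq_mul_inv] using tendsto_inv_nhdsGT_zero.const_mul_atTop hc
  have h2 := (tendsto_pow_mul_exp_neg_atTop_nhds_zero 1).comp h1
  have h3 : Tendsto (fun ε : ℝ => c⁻¹ * ((c/ε)^1 * Real.exp (-(c/ε))))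
      (nhdsWithin 0 (Set.Ioi 0)) (nhds (c⁻¹ * 0)) := h2.const_mul _
  rw [mul_zero] at h3
  refine h3.congr (fun ε => ?_)
  rw [pow_one, ← mul_assoc, mul_div_assoc' c⁻¹ c ε, inv_mul_cancel₀ hc.ne']
  rw [div_eq_mul_inv, one_mul, mul_comm, div_eq_mul_inv]
  rfl

lemma exp_decay_div_sqrt {c : ℝ} (hc : 0 < c) :
    Filter.Tendsto (fun ε : ℝ => Real.exp (-(c/ε)) / Real.sqrt ε)
      (nhdsWithin 0 (Set.Ioi 0)) (nhds 0) := by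
  apply squeeze_zero' ?_ ?_ (exp_decay_div hc)
  · filter_upwards [self_mem_nhdsWithin] with ε (hε : ε ∈ Set.Ioi 0)
    positivity
  · have hmem : Set.Ioc (0:ℝ) 1 ∈ nhdsWithin (0:ℝ) (Set.Ioi 0) :=
      Ioc_mem_nhdsGT_of_mem ⟨le_refl 0, zero_lt_one⟩
    filter_upwards [hmem] with ε hε
    have h1 : ε ≤ Real.sqrt ε := by
      nlinarith [Real.sq_sqrt hε.1.le, Real.sqrt_nonneg ε, hε.1, hε.2,
        Real.sqrt_le_sqrt hε.2, Real.sqrt_one]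
    exact div_le_div_of_nonneg_left (Real.exp_nonneg _) hε.1 h1

lemma integral_exp_linear (x δ K ε : ℝ) (hK : 0 < K) (hε : 0 < ε) :
    ∫ y in x..(x+δ), Real.exp (-(K*(y-x))/ε) = (ε/K) * (1 - Real.exp (-(K*δ)/ε)) := by
  have hd : ∀ y ∈ Set.uIcc x (x+δ), HasDerivAt (fun y => -(ε/K) * Real.exp (-(K*(y-x))/ε))
      (Real.exp (-(K*(y-x))/ε)) y := by
    intro y _
    have h1 : HasDerivAt (fun y : ℝ => -(K*(y-x))/ε) (-K/ε) y := by
      have := (((hasDerivAt_id y).sub_const x).const_mul (-K)).div_const ε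
      convert this using 2 <;> first | rfl | (simp only [id_eq]; ring) | ring
    have h2 := (h1.exp).const_mul (-(ε/K))
    refine h2.congr_deriv ?_
    field_simp
  have hint : IntervalIntegrable (fun y => Real.exp (-(K*(y-x))/ε)) volume x (x+δ) :=
    (Real.continuous_exp.comp (((continuous_const.mul
      (continuous_id.sub continuous_const)).neg).div_const ε)).intervalIntegrable _ _
  rw [intervalIntegral.integral_eq_sub_of_hasDerivAt hd hint]
  simp only [add_sub_cancel_left, sub_self, mul_zero, neg_zero, zero_div, Real.exp_zero]
  ring

lemma integral_linear (P y A : ℝ) : ∫ t in P..y, A*(t-P) = A*(y-P)^2/2 := by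
  have hd : ∀ t ∈ Set.uIcc P y, HasDerivAt (fun t => A*(t-P)^2/2) (A*(t-P)) t := by
    intro t _
    have h1 : HasDerivAt (fun t : ℝ => (t-P)^2) (2*(t-P)) t := by
      have := ((hasDerivAt_id t).sub_const P).pow 2
      refine this.congr_deriv ?_
      simp only [id_eq]
      ring
    have h2 := (h1.const_mul A).div_const 2
    refine h2.congr_deriv ?_
    ring
  have hint : IntervalIntegrable (fun t => A*(t-P)) volume P y :=
    (continuous_const.mul (continuous_id.sub continuous_const)).intervalIntegrable _ _
  rw [intervalIntegral.integral_eq_sub_of_hasDerivAt hd hint]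
  simp

lemma gauss_piece (K δ : ℝ) (hK : 0 < K) (hδ : 0 < δ) :
    Filter.Tendsto (fun ε : ℝ => (∫ y in (0:ℝ)..δ, Real.exp (-(K*y^2)/ε)) / Real.sqrt ε)
      (nhdsWithin 0 (Set.Ioi 0)) (nhds (Real.sqrt (Real.pi/K)/2)) := by
  have hI : Integrable (fun v : ℝ => Real.exp (-K * v^2)) := integrable_exp_neg_mul_sq hK
  have h1 : Filter.Tendsto (fun T : ℝ => ∫ v in (0:ℝ)..T, Real.exp (-K * v^2)) atTop
      (nhds (Real.sqrt (Real.pi/K)/2)) := by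
    have h := MeasureTheory.intervalIntegral_tendsto_integral_Ioi 0 hI.integrableOn tendsto_id
    rwa [integral_gaussian_Ioi K] at h
  have hs : Filter.Tendsto Real.sqrt (nhdsWithin 0 (Set.Ioi 0)) (nhdsWithin 0 (Set.Ioi 0)) := by
    rw [tendsto_nhdsWithin_iff]
    constructor
    · have h0 : Filter.Tendsto Real.sqrt (nhds 0) (nhds 0) := by
        simpa using Real.continuous_sqrt.tendsto 0
      exact h0.mono_left nhdsWithin_le_nhds
    · filter_upwards [self_mem_nhdsWithin] with ε (hε : ε ∈ Set.Ioi 0)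
      exact Real.sqrt_pos.2 hε
  have h2 : Filter.Tendsto (fun ε : ℝ => δ / Real.sqrt ε) (nhdsWithin 0 (Set.Ioi 0)) atTop := by
    have h3 := tendsto_inv_nhdsGT_zero.comp hs
    simpa [div_eq_mul_inv] using h3.const_mul_atTop hδ
  have h3 := h1.comp h2
  refine h3.congr' ?_
  filter_upwards [self_mem_nhdsWithin] with ε (hε : ε ∈ Set.Ioi 0)
  have hε' : (0:ℝ) < ε := hε
  have hsε : 0 < Real.sqrt ε := Real.sqrt_pos.2 hε'
  have hc : (Real.sqrt ε)⁻¹ ≠ 0 := by positivity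
  have key := intervalIntegral.integral_comp_mul_left (a := (0:ℝ)) (b := δ)
    (fun v => Real.exp (-K*v^2)) hc
  simp only [inv_inv, smul_eq_mul, mul_zero] at key
  have hciq : ∀ y : ℝ, Real.exp (-K*((Real.sqrt ε)⁻¹*y)^2) = Real.exp (-(K*y^2)/ε) := by
    intro y
    congr 1
    have h4 : ((Real.sqrt ε)⁻¹)^2 = ε⁻¹ := by rw [inv_pow, Real.sq_sqrt hε'.le]
    rw [mul_pow, h4, div_eq_mul_inv]
    ring
  have key2 : (∫ y in (0:ℝ)..δ, Real.exp (-(K*y^2)/ε))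
      = Real.sqrt ε * ∫ v in (0:ℝ)..((Real.sqrt ε)⁻¹*δ), Real.exp (-K*v^2) := by
    rw [← key]
    exact intervalIntegral.integral_congr (fun y _ => (hciq y).symm)
  show (fun T : ℝ => ∫ v in (0:ℝ)..T, Real.exp (-K * v^2)) (δ / Real.sqrt ε)
      = (∫ y in (0:ℝ)..δ, Real.exp (-(K*y^2)/ε)) / Real.sqrt ε
  rw [key2, mul_comm, mul_div_assoc, div_self hsε.ne', mul_one, inv_mul_eq_div]

lemma sqrt_half_eq (A : ℝ) (hA : 0 < A) :
    Real.sqrt (Real.pi/(A/2))/2 = Real.sqrt (Real.pi/(2*A)) := by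
  have h4 : Real.sqrt 4 = 2 := by
    rw [show (4:ℝ) = 2^2 by norm_num, Real.sqrt_sq (by norm_num)]
  rw [show Real.pi/(2*A) = (Real.pi/(A/2))/4 by field_simp; ring,
    Real.sqrt_div (by positivity) 4, h4]

lemma lap_gauss (S b : ℝ → ℝ) (hb : Continuous b) (hScont : Continuous S) (P X a : ℝ)
    (hPX : P < X) (ha : 0 < a) (hbP : b P = 0)
    (hint : ∀ y, S y - S P = -∫ t in P..y, b t)
    (hd : HasDerivWithinAt b a (Set.Ici P) P)
    (hB : ∀ δ, 0 < δ → ∃ c > 0, ∀ y ∈ Set.Icc (P+δ) X, S y ≤ S P - c) :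
    Filter.Tendsto (fun ε : ℝ => (∫ y in P..X, Real.exp ((S y - S P)/ε)) / Real.sqrt ε)
      (nhdsWithin 0 (Set.Ioi 0)) (nhds (Real.sqrt (Real.pi / (2*a)))) := by
  have contExp : ∀ ε : ℝ, Continuous (fun y => Real.exp ((S y - S P)/ε)) := fun ε =>
    Real.continuous_exp.comp ((hScont.sub continuous_const).div_const ε)
  have contQ : ∀ K ε : ℝ, Continuous (fun y : ℝ => Real.exp (-(K*(y-P)^2)/ε)) := fun K ε =>
    Real.continuous_exp.comp ((((continuous_const.mul
      ((continuous_id.sub continuous_const).pow 2)).neg)).div_const ε)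
  have hslope := hasDerivWithinAt_iff_tendsto_slope.1 hd
  rw [Set.Ici_sdiff_left] at hslope
  -- two-sided linear bounds on b near P (to the right)
  have hlin : ∀ η : ℝ, 0 < η → ∃ δ₁ > 0, ∀ t, P < t → t ≤ P + δ₁ →
      (a-η)*(t-P) ≤ b t ∧ b t ≤ (a+η)*(t-P) := by
    intro η hη
    have hev : ∀ᶠ t in nhdsWithin P (Set.Ioi P), slope b P t ∈ Set.Ioo (a-η) (a+η) :=
      hslope.eventually (Ioo_mem_nhds (by linarith) (by linarith))
    obtain ⟨u, hu, hsub⟩ := mem_nhdsGT_iff_exists_Ioc_subset.1 hev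
    refine ⟨u - P, sub_pos.2 hu, fun t ht1 ht2 => ?_⟩
    have hmem : t ∈ Set.Ioc P u := ⟨ht1, by linarith⟩
    have hsl' : slope b P t ∈ Set.Ioo (a-η) (a+η) := hsub hmem
    rw [slope_def_field, hbP, sub_zero] at hsl'
    have htP : 0 < t - P := by linarith
    exact ⟨((lt_div_iff₀ htP).1 hsl'.1).le, ((div_lt_iff₀ htP).1 hsl'.2).le⟩
  -- quadratic bounds on S
  have hquad : ∀ η δ₁ : ℝ, 0 < η →
      (∀ t, P < t → t ≤ P + δ₁ → (a-η)*(t-P) ≤ b t ∧ b t ≤ (a+η)*(t-P)) →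
      ∀ δ, 0 < δ → δ ≤ δ₁ → ∀ y ∈ Set.Icc P (P+δ),
        -((a+η)*(y-P)^2/2) ≤ S y - S P ∧ S y - S P ≤ -((a-η)*(y-P)^2/2) := by
    intro η δ₁ hη hbnd δ hδ0 hδδ y hy
    have hy1 : P ≤ y := hy.1
    have hlo : (∫ t in P..y, (a-η)*(t-P)) ≤ ∫ t in P..y, b t := by
      apply intervalIntegral.integral_mono_on hy1
        ((continuous_const.mul (continuous_id.sub continuous_const)).intervalIntegrable _ _)
        (hb.intervalIntegrable _ _)
      intro t ht
      rcases eq_or_lt_of_le ht.1 with h|h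
      · subst h; simp [hbP]
      · exact (hbnd t h (by linarith [ht.2, hy.2])).1
    have hhi : (∫ t in P..y, b t) ≤ ∫ t in P..y, (a+η)*(t-P) := by
      apply intervalIntegral.integral_mono_on hy1 (hb.intervalIntegrable _ _)
        ((continuous_const.mul (continuous_id.sub continuous_const)).intervalIntegrable _ _)
      intro t ht
      rcases eq_or_lt_of_le ht.1 with h|h
      · subst h; simp [hbP]
      · exact (hbnd t h (by linarith [ht.2, hy.2])).2
    rw [integral_linear] at hlo hhi
    rw [hint y]
    exact ⟨by linarith, by linarith⟩
  rw [tendsto_order]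
  constructor
  · intro r hr
    obtain ⟨η, hη, hrη⟩ : ∃ η : ℝ, (0 < η) ∧ r < Real.sqrt (Real.pi/((a+η)/2))/2 := by
      have hc0 : ContinuousAt (fun η : ℝ => Real.sqrt (Real.pi/((a+η)/2))/2) 0 := by
        have h0 : ContinuousAt (fun η : ℝ => Real.pi/((a+η)/2)) 0 := by
          apply ContinuousAt.div continuousAt_const (by fun_prop)
          norm_num
          positivity
        exact (Real.continuous_sqrt.continuousAt.comp h0).div_const 2
      have hev : ∀ᶠ η in nhds (0:ℝ), r < Real.sqrt (Real.pi/((a+η)/2))/2 := by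
        apply hc0.eventually_const_lt
        have hval : Real.sqrt (Real.pi/((a+(0:ℝ))/2))/2 = Real.sqrt (Real.pi/(2*a)) := by
          rw [add_zero]; exact sqrt_half_eq a ha
        rw [show (fun η : ℝ => Real.sqrt (Real.pi/((a+η)/2))/2) 0
          = Real.sqrt (Real.pi/((a+(0:ℝ))/2))/2 from rfl, hval]
        exact hr
      have hev2 : ∀ᶠ η in nhdsWithin (0:ℝ) (Set.Ioi 0),
          (0 < η) ∧ r < Real.sqrt (Real.pi/((a+η)/2))/2 := by
        filter_upwards [self_mem_nhdsWithin, hev.filter_mono nhdsWithin_le_nhds] with η h1 h2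
        exact ⟨h1, h2⟩
      exact hev2.exists
    obtain ⟨δ₁, hδ₁, hbnd⟩ := hlin η hη
    set δ := min δ₁ ((X-P)/2) with hδdef
    have hδ0 : 0 < δ := lt_min hδ₁ (by linarith)
    have hδδ₁ : δ ≤ δ₁ := min_le_left _ _
    have hPδX : P + δ ≤ X := by
      have := min_le_right δ₁ ((X-P)/2); linarith
    set Kp := (a+η)/2 with hKp
    have hKp0 : 0 < Kp := by positivity
    have hg := gauss_piece Kp δ hKp0 hδ0
    have hlow : ∀ ε : ℝ, 0 < ε → (∫ y in (0:ℝ)..δ, Real.exp (-(Kp*y^2)/ε)) / Real.sqrt ε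
        ≤ (∫ y in P..X, Real.exp ((S y - S P)/ε)) / Real.sqrt ε := by
      intro ε hε
      have hsε : 0 < Real.sqrt ε := Real.sqrt_pos.2 hε
      apply (div_le_div_iff_of_pos_right hsε).2
      have hshift : (∫ y in P..(P+δ), Real.exp (-(Kp*(y-P)^2)/ε))
          = ∫ y in (0:ℝ)..δ, Real.exp (-(Kp*y^2)/ε) := by
        rw [intervalIntegral.integral_comp_sub_right (fun u => Real.exp (-(Kp*u^2)/ε)) P]
        norm_num
      have hm : (∫ y in P..(P+δ), Real.exp (-(Kp*(y-P)^2)/ε))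
          ≤ ∫ y in P..(P+δ), Real.exp ((S y - S P)/ε) := by
        apply intervalIntegral.integral_mono_on (by linarith)
          ((contQ Kp ε).intervalIntegrable _ _) ((contExp ε).intervalIntegrable _ _)
        intro y hy
        apply Real.exp_le_exp.2
        apply (div_le_div_iff_of_pos_right hε).2
        have hq := (hquad η δ₁ hη hbnd δ hδ0 hδδ₁ y hy).1
        have hKeq : Kp*(y-P)^2 = (a+η)*(y-P)^2/2 := by rw [hKp]; ring
        linarith
      have hsplit : (∫ y in P..X, Real.exp ((S y - S P)/ε))
          = (∫ y in P..(P+δ), Real.exp ((S y - S P)/ε))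
            + ∫ y in (P+δ)..X, Real.exp ((S y - S P)/ε) :=
        (intervalIntegral.integral_add_adjacent_intervals
          ((contExp ε).intervalIntegrable _ _) ((contExp ε).intervalIntegrable _ _)).symm
      have hnn : 0 ≤ ∫ y in (P+δ)..X, Real.exp ((S y - S P)/ε) :=
        intervalIntegral.integral_nonneg (by linarith) (fun y _ => Real.exp_nonneg _)
      rw [← hshift]
      rw [hsplit]
      linarith
    have hev2 : ∀ᶠ ε in nhdsWithin (0:ℝ) (Set.Ioi 0),
        r < (∫ y in (0:ℝ)..δ, Real.exp (-(Kp*y^2)/ε)) / Real.sqrt ε :=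
      hg.eventually_const_lt (by rw [hKp] at *; exact hrη)
    filter_upwards [hev2, self_mem_nhdsWithin] with ε h1 h2
    exact lt_of_lt_of_le h1 (hlow ε h2)
  · intro r hr
    obtain ⟨η, hη, hηa, hrη⟩ : ∃ η : ℝ, 0 < η ∧ η < a ∧
        Real.sqrt (Real.pi/((a-η)/2))/2 < r := by
      have hc0 : ContinuousAt (fun η : ℝ => Real.sqrt (Real.pi/((a-η)/2))/2) 0 := by
        have h0 : ContinuousAt (fun η : ℝ => Real.pi/((a-η)/2)) 0 := by
          apply ContinuousAt.div continuousAt_const (by fun_prop)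
          norm_num
          positivity
        exact (Real.continuous_sqrt.continuousAt.comp h0).div_const 2
      have hev : ∀ᶠ η in nhds (0:ℝ), Real.sqrt (Real.pi/((a-η)/2))/2 < r := by
        apply hc0.eventually_lt_const
        have hval : Real.sqrt (Real.pi/((a-(0:ℝ))/2))/2 = Real.sqrt (Real.pi/(2*a)) := by
          rw [sub_zero]; exact sqrt_half_eq a ha
        rw [show (fun η : ℝ => Real.sqrt (Real.pi/((a-η)/2))/2) 0
          = Real.sqrt (Real.pi/((a-(0:ℝ))/2))/2 from rfl, hval]
        exact hr
      have hev2 : ∀ᶠ η in nhdsWithin (0:ℝ) (Set.Ioi 0),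
          (η ∈ Set.Ioo (0:ℝ) a) ∧ Real.sqrt (Real.pi/((a-η)/2))/2 < r := by
        filter_upwards [Ioo_mem_nhdsGT_of_mem ⟨le_refl (0:ℝ), ha⟩,
          hev.filter_mono nhdsWithin_le_nhds] with η h1 h2
        exact ⟨h1, h2⟩
      obtain ⟨η, h1, h2⟩ := hev2.exists
      exact ⟨η, h1.1, h1.2, h2⟩
    obtain ⟨δ₁, hδ₁, hbnd⟩ := hlin η hη
    set δ := min δ₁ ((X-P)/2) with hδdef
    have hδ0 : 0 < δ := lt_min hδ₁ (by linarith)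
    have hδδ₁ : δ ≤ δ₁ := min_le_left _ _
    have hPδX : P + δ ≤ X := by
      have := min_le_right δ₁ ((X-P)/2); linarith
    set Km := (a-η)/2 with hKm
    have hKm0 : 0 < Km := by rw [hKm]; linarith
    obtain ⟨c, hc, htail⟩ := hB δ hδ0
    have hup : ∀ ε : ℝ, 0 < ε → (∫ y in P..X, Real.exp ((S y - S P)/ε)) / Real.sqrt ε
        ≤ (∫ y in (0:ℝ)..δ, Real.exp (-(Km*y^2)/ε)) / Real.sqrt ε
          + (X-P)*(Real.exp (-(c/ε))/Real.sqrt ε) := by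
      intro ε hε
      have hsε : 0 < Real.sqrt ε := Real.sqrt_pos.2 hε
      have hshift : (∫ y in P..(P+δ), Real.exp (-(Km*(y-P)^2)/ε))
          = ∫ y in (0:ℝ)..δ, Real.exp (-(Km*y^2)/ε) := by
        rw [intervalIntegral.integral_comp_sub_right (fun u => Real.exp (-(Km*u^2)/ε)) P]
        norm_num
      have hm : (∫ y in P..(P+δ), Real.exp ((S y - S P)/ε))
          ≤ ∫ y in P..(P+δ), Real.exp (-(Km*(y-P)^2)/ε) := by
        apply intervalIntegral.integral_mono_on (by linarith)
          ((contExp ε).intervalIntegrable _ _) ((contQ Km ε).intervalIntegrable _ _)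
        intro y hy
        apply Real.exp_le_exp.2
        apply (div_le_div_iff_of_pos_right hε).2
        have hq := (hquad η δ₁ hη hbnd δ hδ0 hδδ₁ y hy).2
        have hKeq : Km*(y-P)^2 = (a-η)*(y-P)^2/2 := by rw [hKm]; ring
        linarith
      have htl : (∫ y in (P+δ)..X, Real.exp ((S y - S P)/ε)) ≤ (X-P)*Real.exp (-(c/ε)) := by
        have h4 : (∫ y in (P+δ)..X, Real.exp ((S y - S P)/ε))
            ≤ ∫ y in (P+δ)..X, Real.exp (-(c/ε)) := by
          apply intervalIntegral.integral_mono_on (by linarith)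
            ((contExp ε).intervalIntegrable _ _) intervalIntegrable_const
          intro y hy
          apply Real.exp_le_exp.2
          rw [neg_div']
          apply (div_le_div_iff_of_pos_right hε).2
          linarith [htail y hy]
        rw [intervalIntegral.integral_const, smul_eq_mul] at h4
        have h5 : (X-(P+δ)) * Real.exp (-(c/ε)) ≤ (X-P)*Real.exp (-(c/ε)) := by
          apply mul_le_mul_of_nonneg_right (by linarith) (Real.exp_nonneg _)
        linarith
      have hsplit : (∫ y in P..X, Real.exp ((S y - S P)/ε))
          = (∫ y in P..(P+δ), Real.exp ((S y - S P)/ε))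
            + ∫ y in (P+δ)..X, Real.exp ((S y - S P)/ε) :=
        (intervalIntegral.integral_add_adjacent_intervals
          ((contExp ε).intervalIntegrable _ _) ((contExp ε).intervalIntegrable _ _)).symm
      rw [hsplit, ← hshift, add_div]
      have h6 : (∫ y in (P+δ)..X, Real.exp ((S y - S P)/ε)) / Real.sqrt ε
          ≤ (X-P)*(Real.exp (-(c/ε))/Real.sqrt ε) := by
        rw [mul_div_assoc'] at *
        exact (div_le_div_iff_of_pos_right hsε).2 htl
      have h7 : (∫ y in P..(P+δ), Real.exp ((S y - S P)/ε)) / Real.sqrt ε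
          ≤ (∫ y in P..(P+δ), Real.exp (-(Km*(y-P)^2)/ε)) / Real.sqrt ε :=
        (div_le_div_iff_of_pos_right hsε).2 hm
      linarith
    have hlim : Filter.Tendsto (fun ε : ℝ =>
        (∫ y in (0:ℝ)..δ, Real.exp (-(Km*y^2)/ε)) / Real.sqrt ε
          + (X-P)*(Real.exp (-(c/ε))/Real.sqrt ε)) (nhdsWithin 0 (Set.Ioi 0))
        (nhds (Real.sqrt (Real.pi/Km)/2 + (X-P)*0)) :=
      (gauss_piece Km δ hKm0 hδ0).add ((exp_decay_div_sqrt hc).const_mul _)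
    have hev2 := hlim.eventually_lt_const (by rw [mul_zero, add_zero, hKm]; exact hrη)
    filter_upwards [hev2, self_mem_nhdsWithin] with ε h1 h2
    exact lt_of_le_of_lt (hup ε h2) h1

lemma lap_endpoint (S b : ℝ → ℝ) (hb : Continuous b) (hScont : Continuous S) (x : ℝ)
    (hint : ∀ y, S y - S x = -∫ t in x..y, b t)
    (hx : 0 < b x)
    (hB : ∀ δ, 0 < δ → δ ≤ 1 → ∃ c > 0, ∀ y ∈ Set.Icc (x+δ) (x+1), S y ≤ S x - c) :
    Filter.Tendsto (fun ε : ℝ => (∫ y in x..(x+1), Real.exp ((S y - S x)/ε)) * b x / ε)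
      (nhdsWithin 0 (Set.Ioi 0)) (nhds 1) := by
  have contExp : ∀ ε : ℝ, Continuous (fun y => Real.exp ((S y - S x)/ε)) := fun ε =>
    Real.continuous_exp.comp ((hScont.sub continuous_const).div_const ε)
  have contLin : ∀ K ε : ℝ, Continuous (fun y => Real.exp (-(K*(y-x))/ε)) := fun K ε =>
    Real.continuous_exp.comp (((continuous_const.mul
      (continuous_id.sub continuous_const)).neg).div_const ε)
  rw [tendsto_order]
  constructor
  · -- lower bounds
    intro r hr
    obtain ⟨η, hη0, hrη⟩ : ∃ η : ℝ, 0 < η ∧ r < 1/(1+η) := by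
      rcases le_or_gt r 0 with h|h
      · exact ⟨1, one_pos, by norm_num; linarith⟩
      · refine ⟨(1-r)/(2*r), div_pos (by linarith) (by linarith), ?_⟩
        have h1 : 1 + (1-r)/(2*r) = (1+r)/(2*r) := by field_simp; ring
        rw [h1, one_div_div, lt_div_iff₀ (by linarith)]
        nlinarith
    set K := (1+η) * b x with hKdef
    have hK : 0 < K := by positivity
    have hev : ∀ᶠ t in nhds x, b t < K := by
      apply hb.continuousAt.eventually_lt_const
      nlinarith
    obtain ⟨δ₁, hδ₁, hball⟩ := Metric.eventually_nhds_iff.1 hev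
    set δ := min (δ₁/2) 1 with hδdef
    have hδ0 : 0 < δ := by positivity
    have hδ1 : δ ≤ 1 := min_le_right _ _
    have hδle : δ ≤ δ₁/2 := min_le_left _ _
    have hbub : ∀ t ∈ Set.Icc x (x+δ), b t ≤ K := by
      intro t ht
      refine (hball ?_).le
      rw [Real.dist_eq, abs_lt]
      constructor <;> [linarith [ht.1]; linarith [ht.2]]
    have lower : ∀ ε : ℝ, 0 < ε →
        (1 - Real.exp (-(K*δ)/ε))/(1+η) ≤ (∫ y in x..(x+1), Real.exp ((S y - S x)/ε)) * b x / ε := by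
      intro ε hε
      have i1 : (∫ y in x..(x+δ), Real.exp (-(K*(y-x))/ε))
          ≤ ∫ y in x..(x+δ), Real.exp ((S y - S x)/ε) := by
        apply intervalIntegral.integral_mono_on (by linarith)
          ((contLin K ε).intervalIntegrable _ _) ((contExp ε).intervalIntegrable _ _)
        intro y hy
        apply Real.exp_le_exp.2
        apply (div_le_div_iff_of_pos_right hε).2
        rw [hint y]
        apply neg_le_neg
        have h2 : (∫ t in x..y, b t) ≤ ∫ t in x..y, (K:ℝ) :=
          intervalIntegral.integral_mono_on hy.1 (hb.intervalIntegrable _ _)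
            intervalIntegrable_const (fun t ht => hbub t ⟨ht.1, le_trans ht.2 hy.2⟩)
        rw [intervalIntegral.integral_const, smul_eq_mul] at h2
        nlinarith [h2]
      have i2 := integral_exp_linear x δ K ε hK hε
      have i3 : (∫ y in x..(x+δ), Real.exp ((S y - S x)/ε))
          ≤ ∫ y in x..(x+1), Real.exp ((S y - S x)/ε) := by
        rw [← intervalIntegral.integral_add_adjacent_intervals
          ((contExp ε).intervalIntegrable x (x+δ)) ((contExp ε).intervalIntegrable (x+δ) (x+1))]
        have h3 : 0 ≤ ∫ y in (x+δ)..(x+1), Real.exp ((S y - S x)/ε) :=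
          intervalIntegral.integral_nonneg (by linarith) (fun y _ => (Real.exp_nonneg _))
        linarith
      have i4 : (ε/K) * (1 - Real.exp (-(K*δ)/ε)) ≤ ∫ y in x..(x+1), Real.exp ((S y - S x)/ε) := by
        rw [← i2]; exact le_trans i1 i3
      have hbxε : 0 ≤ b x / ε := le_of_lt (div_pos hx hε)
      have hη1 : (1:ℝ)+η ≠ 0 := by positivity
      calc (1 - Real.exp (-(K*δ)/ε))/(1+η)
          = ((ε/K) * (1 - Real.exp (-(K*δ)/ε))) * (b x / ε) := by
            rw [hKdef]; field_simp
        _ ≤ (∫ y in x..(x+1), Real.exp ((S y - S x)/ε)) * (b x/ε) :=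
            mul_le_mul_of_nonneg_right i4 hbxε
        _ = (∫ y in x..(x+1), Real.exp ((S y - S x)/ε)) * b x / ε := by ring
    have hlim : Filter.Tendsto (fun ε : ℝ => (1 - Real.exp (-(K*δ)/ε))/(1+η))
        (nhdsWithin 0 (Set.Ioi 0)) (nhds ((1 - 0)/(1+η))) := by
      apply Tendsto.div_const
      apply tendsto_const_nhds.sub
      have h1 : Filter.Tendsto (fun ε : ℝ => (K*δ) / ε) (nhdsWithin 0 (Set.Ioi 0)) atTop := by
        simpa [div_eq_mul_inv] using tendsto_inv_nhdsGT_zero.const_mul_atTop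
          (by positivity : 0 < K*δ)
      have h2 : Filter.Tendsto (fun ε : ℝ => -((K*δ) / ε)) (nhdsWithin 0 (Set.Ioi 0)) atBot :=
        tendsto_neg_atTop_atBot.comp h1
      have h3 := Real.tendsto_exp_atBot.comp h2
      refine h3.congr fun ε => ?_
      simp [neg_div]
    have hev2 : ∀ᶠ ε in nhdsWithin (0:ℝ) (Set.Ioi 0),
        r < (1 - Real.exp (-(K*δ)/ε))/(1+η) :=
      hlim.eventually_const_lt (by simpa using hrη)
    filter_upwards [hev2, self_mem_nhdsWithin] with ε h1 h2
    exact lt_of_lt_of_le h1 (lower ε h2)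
  · -- upper bounds
    intro r hr
    obtain ⟨η, hη0, hη1, hrη⟩ : ∃ η : ℝ, 0 < η ∧ η < 1 ∧ 1/(1-η) < r := by
      refine ⟨(r-1)/(2*r), div_pos (by linarith) (by linarith), ?_, ?_⟩
      · rw [div_lt_one (by linarith)]; linarith
      · have h1 : 1 - (r-1)/(2*r) = (r+1)/(2*r) := by field_simp; ring
        rw [h1, one_div_div, div_lt_iff₀ (by linarith)]
        nlinarith
    set K := (1-η) * b x with hKdef
    have hK : 0 < K := mul_pos (by linarith) hx
    have hev : ∀ᶠ t in nhds x, K < b t := by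
      apply hb.continuousAt.eventually_const_lt
      nlinarith
    obtain ⟨δ₁, hδ₁, hball⟩ := Metric.eventually_nhds_iff.1 hev
    set δ := min (δ₁/2) 1 with hδdef
    have hδ0 : 0 < δ := by positivity
    have hδ1 : δ ≤ 1 := min_le_right _ _
    have hδle : δ ≤ δ₁/2 := min_le_left _ _
    have hblb : ∀ t ∈ Set.Icc x (x+δ), K ≤ b t := by
      intro t ht
      refine (hball ?_).le
      rw [Real.dist_eq, abs_lt]
      constructor <;> [linarith [ht.1]; linarith [ht.2]]
    obtain ⟨c, hc, htail⟩ := hB δ hδ0 hδ1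
    have upper : ∀ ε : ℝ, 0 < ε →
        (∫ y in x..(x+1), Real.exp ((S y - S x)/ε)) * b x / ε
          ≤ 1/(1-η) + b x * (Real.exp (-(c/ε))/ε) := by
      intro ε hε
      have i1 : (∫ y in x..(x+δ), Real.exp ((S y - S x)/ε))
          ≤ ∫ y in x..(x+δ), Real.exp (-(K*(y-x))/ε) := by
        apply intervalIntegral.integral_mono_on (by linarith)
          ((contExp ε).intervalIntegrable _ _) ((contLin K ε).intervalIntegrable _ _)
        intro y hy
        apply Real.exp_le_exp.2
        apply (div_le_div_iff_of_pos_right hε).2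
        rw [hint y]
        apply neg_le_neg
        have h2 : (∫ t in x..y, (K:ℝ)) ≤ ∫ t in x..y, b t :=
          intervalIntegral.integral_mono_on hy.1 intervalIntegrable_const
            (hb.intervalIntegrable _ _) (fun t ht => hblb t ⟨ht.1, le_trans ht.2 hy.2⟩)
        rw [intervalIntegral.integral_const, smul_eq_mul] at h2
        nlinarith [h2]
      have i2 : (∫ y in (x+δ)..(x+1), Real.exp ((S y - S x)/ε)) ≤ Real.exp (-(c/ε)) := by
        have h4 : (∫ y in (x+δ)..(x+1), Real.exp ((S y - S x)/ε))
            ≤ ∫ y in (x+δ)..(x+1), Real.exp (-(c/ε)) := by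
          apply intervalIntegral.integral_mono_on (by linarith)
            ((contExp ε).intervalIntegrable _ _) intervalIntegrable_const
          intro y hy
          apply Real.exp_le_exp.2
          rw [neg_div']
          apply (div_le_div_iff_of_pos_right hε).2
          linarith [htail y hy]
        rw [intervalIntegral.integral_const, smul_eq_mul] at h4
        have h5 : (x+1-(x+δ)) * Real.exp (-(c/ε)) ≤ Real.exp (-(c/ε)) := by
          nlinarith [Real.exp_nonneg (-(c/ε))]
        linarith
      have i3 : (∫ y in x..(x+δ), Real.exp (-(K*(y-x))/ε)) ≤ ε/K := by
        rw [integral_exp_linear x δ K ε hK hε]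
        have hE : 0 ≤ Real.exp (-(K*δ)/ε) := Real.exp_nonneg _
        nlinarith [le_of_lt (div_pos hε hK)]
      have isplit : (∫ y in x..(x+1), Real.exp ((S y - S x)/ε))
          = (∫ y in x..(x+δ), Real.exp ((S y - S x)/ε))
            + (∫ y in (x+δ)..(x+1), Real.exp ((S y - S x)/ε)) :=
        (intervalIntegral.integral_add_adjacent_intervals
          ((contExp ε).intervalIntegrable _ _) ((contExp ε).intervalIntegrable _ _)).symm
      have itot : (∫ y in x..(x+1), Real.exp ((S y - S x)/ε)) ≤ ε/K + Real.exp (-(c/ε)) := by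
        rw [isplit]; exact add_le_add (le_trans i1 i3) i2
      have hηη : (1:ℝ) - η ≠ 0 := by linarith
      calc (∫ y in x..(x+1), Real.exp ((S y - S x)/ε)) * b x / ε
          ≤ (ε/K + Real.exp (-(c/ε))) * b x / ε :=
            (div_le_div_iff_of_pos_right hε).2 (mul_le_mul_of_nonneg_right itot hx.le)
        _ = 1/(1-η) + b x * (Real.exp (-(c/ε))/ε) := by
            rw [hKdef]; field_simp
    have hlim : Filter.Tendsto (fun ε : ℝ => 1/(1-η) + b x * (Real.exp (-(c/ε))/ε))
        (nhdsWithin 0 (Set.Ioi 0)) (nhds (1/(1-η) + b x * 0)) :=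
      tendsto_const_nhds.add ((exp_decay_div hc).const_mul _)
    have hev2 := hlim.eventually_lt_const (by rw [mul_zero, add_zero]; exact hrη)
    filter_upwards [hev2, self_mem_nhdsWithin] with ε h1 h2
    exact lt_of_le_of_lt (upper ε h2) h1

lemma pos_right_of_deriv (b : ℝ → ℝ) (P aa : ℝ) (hbP : b P = 0) (ha : 0 < aa)
    (hd : HasDerivWithinAt b aa (Set.Ici P) P) :
    ∃ δ > 0, ∀ t, P < t → t ≤ P + δ → 0 < b t := by
  have hslope := hasDerivWithinAt_iff_tendsto_slope.1 hd
  rw [Set.Ici_sdiff_left] at hslope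
  have hev : ∀ᶠ t in nhdsWithin P (Set.Ioi P), 0 < slope b P t :=
    hslope.eventually_const_lt ha
  obtain ⟨u, hu, hsub⟩ := mem_nhdsGT_iff_exists_Ioc_subset.1 hev
  refine ⟨u - P, sub_pos.2 hu, fun t ht1 ht2 => ?_⟩
  have h1 : (0:ℝ) < slope b P t := hsub ⟨ht1, by linarith⟩
  rw [slope_def_field, hbP, sub_zero] at h1
  have htP : 0 < t - P := by linarith
  have h2 := mul_pos h1 htP
  rwa [div_mul_cancel₀ _ htP.ne'] at h2

lemma hasDeriv_of_derivWithin_pos {b : ℝ → ℝ} {P : ℝ}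
    (h : 0 < derivWithin b (Set.Ici P) P) :
    HasDerivWithinAt b (derivWithin b (Set.Ici P) P) (Set.Ici P) P := by
  by_cases hdiff : DifferentiableWithinAt ℝ b (Set.Ici P) P
  · exact hdiff.hasDerivWithinAt
  · rw [derivWithin_zero_of_not_differentiableWithinAt hdiff] at h
    exact absurd h (lt_irrefl 0)

lemma bnonneg (b S : ℝ → ℝ) (hb : Continuous b)
    (hint : ∀ u v : ℝ, S v - S u = -∫ t in u..v, b t)
    (L l : ℝ) (hLl : L < l)
    (hzL : ∀ y, L ≤ y → S y ≤ S L)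
    (sn : ℕ) (cm cp : ℕ → ℝ)
    (hcomp : {θ : ℝ | θ ∈ Set.Ioo L l ∧ b θ = 0}
      = ⋃ j ∈ Finset.range sn, Set.Icc (cm j) (cp j))
    (hside : ∀ j < sn, ∃ δ > 0, ∀ t, cp j < t → t ≤ cp j + δ → 0 < b t) :
    ∀ u ∈ Set.Ioo L l, 0 ≤ b u := by
  intro u hu
  by_contra hneg
  push_neg at hneg
  set Z := insert L {t : ℝ | t ∈ Set.Icc L u ∧ b t = 0} with hZ
  have hZc : IsClosed Z := by
    have h1 : {t : ℝ | t ∈ Set.Icc L u ∧ b t = 0} = Set.Icc L u ∩ b ⁻¹' {0} := by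
      ext t; simp [Set.mem_inter_iff]
    have h2 : Z = {L} ∪ (Set.Icc L u ∩ b ⁻¹' {0}) := by
      rw [hZ, h1, Set.singleton_union]
    rw [h2]
    exact (isClosed_singleton).union (isClosed_Icc.inter (isClosed_singleton.preimage hb))
  have hZne : Z.Nonempty := ⟨L, Set.mem_insert _ _⟩
  have hub : ∀ t ∈ Z, t ≤ u := by
    intro t ht
    rcases Set.mem_insert_iff.1 ht with h|h
    · rw [h]; exact hu.1.le
    · exact h.1.2
  have hZbdd : BddAbove Z := ⟨u, fun t ht => hub t ht⟩
  set w := sSup Z with hw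
  have hwZ : w ∈ Z := hZc.csSup_mem hZne hZbdd
  have hwu : w ≤ u := hub w hwZ
  have hLw : L ≤ w := le_csSup hZbdd (Set.mem_insert _ _)
  have hbneg : ∀ t, w < t → t ≤ u → b t < 0 := by
    intro t hwt htu
    rcases lt_trichotomy (b t) 0 with h|h|h
    · exact h
    · exfalso
      have hmem : t ∈ Z := Set.mem_insert_iff.2 (Or.inr ⟨⟨hLw.trans hwt.le, htu⟩, h⟩)
      exact absurd (le_csSup hZbdd hmem) (not_le.2 hwt)
    · exfalso
      have htu' : t < u := lt_of_le_of_ne htu (by rintro rfl; linarith)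
      have h0 : (0:ℝ) ∈ Set.Icc (b u) (b t) := ⟨hneg.le, h.le⟩
      obtain ⟨s', hs', hbs'⟩ := intermediate_value_Icc' htu'.le hb.continuousOn h0
      have hmem : s' ∈ Z := Set.mem_insert_iff.2
        (Or.inr ⟨⟨hLw.trans (hwt.le.trans hs'.1), hs'.2⟩, hbs'⟩)
      have := le_csSup hZbdd hmem
      linarith [hs'.1]
  have hwu' : w < u := by
    rcases lt_or_eq_of_le hwu with h|h
    · exact h
    · exfalso
      rw [h] at hwZ
      rcases Set.mem_insert_iff.1 hwZ with h1|h1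
      · rw [h1] at hu; exact lt_irrefl L hu.1
      · exact absurd h1.2 hneg.ne
  have hIpos : 0 < ∫ t in w..u, -b t :=
    intervalIntegral.intervalIntegral_pos_of_pos_on ((hb.neg).intervalIntegrable _ _)
      (fun t ht => neg_pos.2 (hbneg t ht.1 ht.2.le)) hwu'
  have hSu : S w < S u := by
    have h := hint w u
    rw [intervalIntegral.integral_neg] at hIpos
    linarith
  rcases Set.mem_insert_iff.1 hwZ with hwL|hwmem
  · have := hzL u hu.1.le
    rw [hwL] at hSu
    linarith
  · rcases eq_or_lt_of_le hwmem.1.1 with hwL|hwL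
    · have := hzL u hu.1.le
      rw [← hwL] at hSu
      linarith
    · have hwIoo : w ∈ Set.Ioo L l := ⟨hwL, lt_of_le_of_lt hwu hu.2⟩
      have hwun : w ∈ ⋃ j ∈ Finset.range sn, Set.Icc (cm j) (cp j) := by
        rw [← hcomp]; exact ⟨hwIoo, hwmem.2⟩
      simp only [Set.mem_iUnion, Finset.mem_range, exists_prop] at hwun
      obtain ⟨j, hj, hwj⟩ := hwun
      have hcpw : cp j ≤ w := by
        by_contra hcpw
        push_neg at hcpw
        have htw : w < min (cp j) u := lt_min hcpw hwu'
        have hbt : b (min (cp j) u) < 0 := hbneg _ htw (min_le_right _ _)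
        have htc : min (cp j) u ∈ Set.Icc (cm j) (cp j) :=
          ⟨le_trans hwj.1 htw.le, min_le_left _ _⟩
        have hmem : min (cp j) u ∈ {θ : ℝ | θ ∈ Set.Ioo L l ∧ b θ = 0} := by
          rw [hcomp]; simp only [Set.mem_iUnion, Finset.mem_range, exists_prop]
          exact ⟨j, hj, htc⟩
        exact absurd hmem.2 hbt.ne
      have hwcp : w = cp j := le_antisymm hwj.2 hcpw
      obtain ⟨δ, hδ, hpos⟩ := hside j hj
      have htw : w < min (w+δ) u := lt_min (by linarith) hwu'
      have hbt : b (min (w+δ) u) < 0 := hbneg _ htw (min_le_right _ _)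
      have hbt2 : 0 < b (min (w+δ) u) := by
        apply hpos _ (by rw [← hwcp]; exact htw)
        rw [← hwcp]
        exact min_le_left _ _
      linarith

/-- (Proposition 5.1(2): sharp estimate on the saddle intervals.)
Assuming `q ≥ 1`: on `ℱ`, `π_ε(x) = (G₀(x) + √ε G₁(x) + o(√ε)) e^{-V̂(x)/ε}`, and on
`𝒢`, `π_ε(x) = (1+o(1)) ε G₂(x) e^{-V̂(x)/ε}`. -/
theorem sharp_estimate_on_saddle_intervals
    (b : ℝ → ℝ) (hb : Continuous b) (hbper : ∀ x, b (x + 1) = b x)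
    (hB : 0 < ∫ θ in (0:ℝ)..1, b θ)
    (S : ℝ → ℝ) (hS : ∀ x, S x = -∫ t in (0:ℝ)..x, b t)
    -- (H1)–(H3)
    (p : ℕ) (li ri : ℕ → ℝ)
    (hcomp : {θ : ℝ | θ ∈ Set.Ico (0:ℝ) 1 ∧ b θ = 0}
        = ⋃ j ∈ Finset.range p, Set.Icc (li j) (ri j))
    (hcord : ∀ j, j + 1 < p → ri j < li (j + 1))
    (hcin : ∀ j < p, 0 < li j ∧ li j ≤ ri j ∧ ri j < 1)
    (hC2 : ContDiffOn ℝ 2 b {θ : ℝ | b θ ≠ 0})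
    (hH3 : ∀ j < p, derivWithin b (Set.Ici (ri j)) (ri j) ≠ 0 ∧
        derivWithin b (Set.Iic (li j)) (li j) ≠ 0)
    -- the farthest maximum to the right and the quasi-potential
    (z : ℝ → ℝ)
    (hz : ∀ x, x ≤ z x ∧ (∀ y, x ≤ y → S y ≤ S (z x)) ∧
        (∀ y, x ≤ y → S y = S (z x) → y ≤ z x))
    -- landscapes `Λ_n = [ℓ_n, L⁺_{n+1}]` and saddle intervals `Σ_n = (L⁺_n, ℓ_n)`
    (m' : ℕ) (hm' : 1 ≤ m') (ℓ Lp : ℕ → ℝ)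
    (hsaddle : ∀ n ≤ m', Lp n < ℓ n)
    (hland : ∀ n < m', ℓ n < Lp (n + 1))
    (hLfix : ∀ n ≤ m', z (Lp n) = Lp n)
    (hheight : ∀ n < m', S (ℓ n) = S (Lp (n + 1)))
    (hzland : ∀ n < m', ∀ x ∈ Set.Icc (ℓ n) (Lp (n + 1)), S (z x) = S (ℓ n))
    -- components of `{b = 0}` inside the saddle intervals; `ℱ`, `𝒢`, `G₀`, `G₁`, `G₂`
    (s : ℕ → ℕ) (cm cp : ℕ → ℕ → ℝ)
    (hcSig : ∀ n < m', ∀ j < s n, Lp n < cm n j ∧ cm n j ≤ cp n j ∧ cp n j < ℓ n)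
    (hcord2 : ∀ n < m', ∀ j, j + 1 < s n → cp n j < cm n (j + 1))
    (hcompSig : ∀ n < m', {θ : ℝ | θ ∈ Set.Ioo (Lp n) (ℓ n) ∧ b θ = 0}
        = ⋃ j ∈ Finset.range (s n), Set.Icc (cm n j) (cp n j))
    (hcpside : ∀ n < m', ∀ j < s n, 0 < derivWithin b (Set.Ici (cp n j)) (cp n j))
    (G₀ G₁ G₂ : ℝ → ℝ)
    (hG₀Sig : ∀ n < m', ∀ x ∈ Set.Ioo (Lp n) (ℓ n), G₀ x = z x - x)
    (hG₁Sig : ∀ n < m', ∀ x ∈ Set.Ioo (Lp n) (ℓ n), G₁ x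
        = ∑ j ∈ Finset.range (s n),
            if cm n j ≤ x ∧ x ≤ cp n j
            then Real.sqrt (Real.pi / (2 * |derivWithin b (Set.Ici (cp n j)) (cp n j)|))
            else 0)
    (hG₂Sig : ∀ n < m', ∀ x ∈ Set.Ioo (Lp n) (ℓ n), G₂ x = if b x = 0 then 0 else 1 / b x)
    (F' G' : Set ℝ)
    (hF' : F' = ⋃ n ∈ Finset.range m', ⋃ j ∈ Finset.range (s n), Set.Icc (cm n j) (cp n j))
    (hG' : G' = (⋃ n ∈ Finset.range m', Set.Ioo (Lp n) (ℓ n)) \ F')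
    -- the (unnormalized) stationary density
    (πe : ℝ → ℝ → ℝ)
    (hπ : ∀ ε x, πe ε x = ∫ y in x..(x + 1), Real.exp ((S y - S x) / ε))
    :
    (∀ x ∈ F', Filter.Tendsto
        (fun ε : ℝ => (Real.exp ((S x - S (z x)) / ε) * πe ε x
            - G₀ x - Real.sqrt ε * G₁ x) / Real.sqrt ε)
        (nhdsWithin (0:ℝ) (Set.Ioi 0)) (nhds 0)) ∧
    (∀ x ∈ G', Filter.Tendsto
        (fun ε : ℝ => Real.exp ((S x - S (z x)) / ε) * πe ε x / (ε * G₂ x))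
        (nhdsWithin (0:ℝ) (Set.Ioi 0)) (nhds 1)) := by
  -- Basic consequences of the hypotheses
  have hper : Function.Periodic b 1 := hbper
  have hScont : Continuous S := by
    have h1 : Continuous fun x : ℝ => ∫ t in (0:ℝ)..x, b t :=
      intervalIntegral.continuous_primitive (μ := MeasureTheory.volume) (f := b)
        (fun a c => hb.intervalIntegrable a c) 0
    have h2 : S = fun x => -∫ t in (0:ℝ)..x, b t := funext hS
    rw [h2]; exact h1.neg
  have hintSub : ∀ u v : ℝ, S v - S u = -∫ t in u..v, b t := by
    intro u v
    have h := intervalIntegral.integral_interval_sub_left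
      (hb.intervalIntegrable (μ := MeasureTheory.volume) 0 v) (hb.intervalIntegrable 0 u)
    rw [hS u, hS v]
    linarith
  -- per-saddle structural facts
  have master : ∀ n, n < m' → (∀ u ∈ Set.Ioo (Lp n) (ℓ n), 0 ≤ b u) ∧
      (∀ u, Lp n < u → u ≤ ℓ n → ∀ y, u ≤ y → S y ≤ S u) := by
    intro n hn
    have hn' : n ≤ m' := hn.le
    have hzLp : ∀ y, Lp n ≤ y → S y ≤ S (Lp n) := by
      intro y hy
      have h := (hz (Lp n)).2.1 y hy
      rwa [hLfix n hn'] at h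
    have hcapl : ∀ y, ℓ n ≤ y → S y ≤ S (ℓ n) := by
      intro y hy
      have h := (hz (ℓ n)).2.1 y hy
      rwa [hzland n hn (ℓ n) ⟨le_refl _, (hland n hn).le⟩] at h
    have hside : ∀ j < s n, ∃ δ > 0, ∀ t, cp n j < t → t ≤ cp n j + δ → 0 < b t := by
      intro j hj
      have hcp0 : b (cp n j) = 0 := by
        have hmem : cp n j ∈ {θ : ℝ | θ ∈ Set.Ioo (Lp n) (ℓ n) ∧ b θ = 0} := by
          rw [hcompSig n hn]
          simp only [Set.mem_iUnion, Finset.mem_range, exists_prop]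
          exact ⟨j, hj, ⟨(hcSig n hn j hj).2.1, le_refl _⟩⟩
        exact hmem.2
      exact pos_right_of_deriv b _ _ hcp0 (hcpside n hn j hj)
        (hasDeriv_of_derivWithin_pos (hcpside n hn j hj))
    have hbn : ∀ u ∈ Set.Ioo (Lp n) (ℓ n), 0 ≤ b u :=
      bnonneg b S hb hintSub (Lp n) (ℓ n) (hsaddle n hn') hzLp (s n) (cm n) (cp n)
        (hcompSig n hn) hside
    have hbl : 0 ≤ b (ℓ n) := by
      have htd : Filter.Tendsto b (nhdsWithin (ℓ n) (Set.Iio (ℓ n))) (nhds (b (ℓ n))) :=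
        hb.continuousAt.mono_left nhdsWithin_le_nhds
      apply ge_of_tendsto htd
      filter_upwards [Ioo_mem_nhdsLT_of_mem (Set.mem_Ioc.2 ⟨hsaddle n hn', le_refl _⟩)]
        with t ht2
      exact hbn t ht2
    have hmono : ∀ u v, Lp n < u → u ≤ v → v ≤ ℓ n → S v ≤ S u := by
      intro u v h1 h2 h3
      have h4 : S v - S u = -∫ t in u..v, b t := hintSub u v
      have h5 : 0 ≤ ∫ t in u..v, b t := by
        apply intervalIntegral.integral_nonneg h2
        intro t ht
        rcases eq_or_lt_of_le (le_trans ht.2 h3) with h|h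
        · rw [h]; exact hbl
        · exact hbn t ⟨lt_of_lt_of_le h1 ht.1, h⟩
      linarith
    refine ⟨hbn, fun u h1 h2 y hy => ?_⟩
    rcases le_or_gt y (ℓ n) with h|h
    · exact hmono u y h1 hy h
    · exact le_trans (hcapl y h.le) (hmono u (ℓ n) h1 h2 (le_refl _))
  constructor
  · intro x hxF
    rw [hF'] at hxF
    simp only [Set.mem_iUnion, Finset.mem_range, exists_prop] at hxF
    obtain ⟨n, hn, j, hj, hxj⟩ := hxF
    obtain ⟨hbn, claimC⟩ := master n hn
    obtain ⟨hc1, hc2, hc3⟩ := hcSig n hn j hj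
    set P := cp n j with hP
    have hLpP : Lp n < P := lt_of_lt_of_le hc1 hc2
    have hxIoo : x ∈ Set.Ioo (Lp n) (ℓ n) :=
      ⟨lt_of_lt_of_le hc1 hxj.1, lt_of_le_of_lt hxj.2 hc3⟩
    have hbz : ∀ t ∈ Set.Icc (cm n j) (cp n j), b t = 0 := by
      intro t ht
      have hmem : t ∈ {θ : ℝ | θ ∈ Set.Ioo (Lp n) (ℓ n) ∧ b θ = 0} := by
        rw [hcompSig n hn]
        simp only [Set.mem_iUnion, Finset.mem_range, exists_prop]
        exact ⟨j, hj, ht⟩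
      exact hmem.2
    have hbP0 : b P = 0 := hbz P ⟨hc2, le_refl _⟩
    set a := derivWithin b (Set.Ici P) P with ha
    have ha0 : 0 < a := hcpside n hn j hj
    have hd : HasDerivWithinAt b a (Set.Ici P) P := hasDeriv_of_derivWithin_pos ha0
    obtain ⟨δ₀', hδ₀', hposr⟩ := pos_right_of_deriv b P a hbP0 ha0 hd
    set δ₀ := min δ₀' ((ℓ n - P)/2) with hδ₀def
    have hδ₀0 : 0 < δ₀ := lt_min hδ₀' (by linarith)
    have hδ₀l : P + δ₀ ≤ ℓ n := by
      have := min_le_right δ₀' ((ℓ n - P)/2); linarith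
    have hposr' : ∀ t, P < t → t ≤ P + δ₀ → 0 < b t := fun t h1 h2 =>
      hposr t h1 (le_trans h2 (by linarith [min_le_left δ₀' ((ℓ n - P)/2)]))
    have hSxP : S P = S x := by
      have h := hintSub x P
      have hz0 : (∫ t in x..P, b t) = 0 := by
        have heq : Set.EqOn b 0 (Set.uIcc x P) := by
          intro t ht
          rw [Set.uIcc_of_le hxj.2] at ht
          exact hbz t ⟨le_trans hxj.1 ht.1, ht.2⟩
        rw [intervalIntegral.integral_congr heq]; simp
      rw [hz0, neg_zero] at h
      linarith
    have hafter : ∀ y, P < y → S y < S P := by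
      intro y hy
      have ht1 : P < min y (P + δ₀) := lt_min hy (by linarith)
      have ht2 : min y (P + δ₀) ≤ ℓ n := le_trans (min_le_right _ _) hδ₀l
      have hSt : S (min y (P + δ₀)) < S P := by
        have h := hintSub P (min y (P + δ₀))
        have hI : 0 < ∫ t in P..(min y (P + δ₀)), b t :=
          intervalIntegral.intervalIntegral_pos_of_pos_on (hb.intervalIntegrable _ _)
            (fun t ht => hposr' t ht.1 (le_trans ht.2.le (min_le_right _ _))) ht1
        linarith
      exact lt_of_le_of_lt
        (claimC (min y (P + δ₀)) (lt_trans hLpP ht1) ht2 y (min_le_left _ _)) hSt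
    have hSzx : S (z x) = S x := by
      have h1 := (hz x).2.1 x (le_refl x)
      have h2 : S (z x) ≤ S x := claimC x hxIoo.1 hxIoo.2.le (z x) (hz x).1
      linarith
    have hzxP : z x = P := by
      have hPz : P ≤ z x := (hz x).2.2 P hxj.2 (by rw [hSzx, hSxP])
      rcases eq_or_lt_of_le hPz with h|h
      · exact h.symm
      · exfalso
        have h3 := hafter (z x) h
        rw [hSzx, ← hSxP] at h3
        exact lt_irrefl _ h3
    have hPx1 : P < x + 1 := by
      by_contra hcon
      push_neg at hcon
      have hz1 : (∫ t in x..(x+1), b t) = 0 := by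
        have heq : Set.EqOn b 0 (Set.uIcc x (x+1)) := by
          intro t ht
          rw [Set.uIcc_of_le (by linarith : x ≤ x + 1)] at ht
          exact hbz t ⟨le_trans hxj.1 ht.1, le_trans ht.2 hcon⟩
        rw [intervalIntegral.integral_congr heq]; simp
      have hper2 := hper.intervalIntegral_add_eq x 0
      rw [zero_add, hz1] at hper2
      rw [← hper2] at hB
      exact lt_irrefl 0 hB
    have hBtail : ∀ δ, 0 < δ → ∃ c > 0, ∀ y ∈ Set.Icc (P+δ) (x+1), S y ≤ S P - c := by
      intro δ hδ
      have hδ'0 : 0 < min δ δ₀ := lt_min hδ hδ₀0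
      have hc : 0 < S P - S (P + min δ δ₀) := by
        have h := hintSub P (P + min δ δ₀)
        have hI : 0 < ∫ t in P..(P + min δ δ₀), b t :=
          intervalIntegral.intervalIntegral_pos_of_pos_on (hb.intervalIntegrable _ _)
            (fun t ht => hposr' t ht.1 (by linarith [ht.2.le, min_le_right δ δ₀])) (by linarith)
        linarith
      refine ⟨S P - S (P + min δ δ₀), hc, fun y hy => ?_⟩
      have h1 : S y ≤ S (P + min δ δ₀) := by
        apply claimC (P + min δ δ₀) (by linarith) (by linarith [min_le_right δ δ₀]) y
        have := min_le_left δ δ₀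
        linarith [hy.1]
      linarith
    have hlg := lap_gauss S b hb hScont P (x+1) a hPx1 ha0 hbP0
      (fun y => hintSub P y) hd hBtail
    have hG0 : G₀ x = P - x := by rw [hG₀Sig n hn x hxIoo, hzxP]
    have hordc : ∀ k, ∀ i, i < k → k < s n → cp n i < cm n k := by
      intro k
      induction k with
      | zero => intro i hi _; omega
      | succ k ih =>
        intro i hik hk
        rcases Nat.lt_succ_iff_lt_or_eq.1 hik with h|h
        · have h1 := ih i h (by omega)
          have h2 := (hcSig n hn k (by omega)).2.1
          have h3 := hcord2 n hn k hk
          linarith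
        · rw [h]
          exact hcord2 n hn k hk
    have hG1 : G₁ x = Real.sqrt (Real.pi/(2*a)) := by
      rw [hG₁Sig n hn x hxIoo]
      rw [Finset.sum_eq_single_of_mem j (Finset.mem_range.2 hj)]
      · rw [if_pos ⟨hxj.1, hxj.2⟩, abs_of_pos ha0]
      · intro k hk hkj
        rw [if_neg]
        intro hcond
        rcases lt_or_gt_of_ne hkj with h|h
        · have := hordc j k h hj
          linarith [hcond.2, hxj.1]
        · have := hordc k j h (Finset.mem_range.1 hk)
          linarith [hcond.1, hxj.2]
    have hfin : Filter.Tendsto (fun ε : ℝ =>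
        (∫ y in P..(x+1), Real.exp ((S y - S P)/ε))/Real.sqrt ε - G₁ x)
        (nhdsWithin 0 (Set.Ioi 0)) (nhds (Real.sqrt (Real.pi/(2*a)) - G₁ x)) :=
      hlg.sub_const _
    rw [hG1, sub_self] at hfin
    apply Filter.Tendsto.congr' ?_ hfin
    filter_upwards [self_mem_nhdsWithin] with ε (hε : ε ∈ Set.Ioi 0)
    have hε' : (0:ℝ) < ε := hε
    have hsε : 0 < Real.sqrt ε := Real.sqrt_pos.2 hε'
    have hsplit : (∫ y in x..(x+1), Real.exp ((S y - S x)/ε))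
        = (P - x) + ∫ y in P..(x+1), Real.exp ((S y - S P)/ε) := by
      have hi1 : (∫ y in x..P, Real.exp ((S y - S x)/ε)) = P - x := by
        have heq : Set.EqOn (fun y => Real.exp ((S y - S x)/ε)) (fun _ => (1:ℝ))
            (Set.uIcc x P) := by
          intro y hy
          rw [Set.uIcc_of_le hxj.2] at hy
          have hSy : S y = S x := by
            have h := hintSub x y
            have hz0 : (∫ t in x..y, b t) = 0 := by
              have heq2 : Set.EqOn b 0 (Set.uIcc x y) := by
                intro t ht
                rw [Set.uIcc_of_le hy.1] at ht
                exact hbz t ⟨le_trans hxj.1 ht.1, le_trans ht.2 hy.2⟩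
              rw [intervalIntegral.integral_congr heq2]; simp
            rw [hz0, neg_zero] at h
            linarith
          simp [hSy]
        rw [intervalIntegral.integral_congr heq]
        simp
      have hi2 : (∫ y in P..(x+1), Real.exp ((S y - S x)/ε))
          = ∫ y in P..(x+1), Real.exp ((S y - S P)/ε) := by
        apply intervalIntegral.integral_congr
        intro y _
        rw [hSxP]
      have cE : ∀ u v : ℝ, IntervalIntegrable (fun y => Real.exp ((S y - S x)/ε))
          MeasureTheory.volume u v := fun u v =>
        (Real.continuous_exp.comp ((hScont.sub continuous_const).div_const ε)).intervalIntegrable u v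
      rw [← intervalIntegral.integral_add_adjacent_intervals (cE x P) (cE P (x+1)), hi1, hi2]
    show (∫ y in P..(x+1), Real.exp ((S y - S P)/ε))/Real.sqrt ε - Real.sqrt (Real.pi/(2*a))
        = (Real.exp ((S x - S (z x)) / ε) * πe ε x - G₀ x - Real.sqrt ε * G₁ x) / Real.sqrt ε
    rw [hπ ε x, hSzx, sub_self, zero_div, Real.exp_zero, one_mul, hsplit, hG0, hG1,
      add_sub_cancel_left, sub_div, mul_comm (Real.sqrt ε), mul_div_assoc,
      div_self hsε.ne', mul_one]
  · intro x hxG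
    rw [hG'] at hxG
    obtain ⟨hxU, hxF⟩ := hxG
    simp only [Set.mem_iUnion, Finset.mem_range, exists_prop] at hxU
    obtain ⟨n, hn, hxIoo⟩ := hxU
    obtain ⟨hbn, claimC⟩ := master n hn
    have hbx : b x ≠ 0 := by
      intro h0
      apply hxF
      have hmem : x ∈ {θ : ℝ | θ ∈ Set.Ioo (Lp n) (ℓ n) ∧ b θ = 0} := ⟨hxIoo, h0⟩
      rw [hcompSig n hn] at hmem
      simp only [Set.mem_iUnion, Finset.mem_range, exists_prop] at hmem
      obtain ⟨j, hj, hxj⟩ := hmem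
      rw [hF']
      simp only [Set.mem_iUnion, Finset.mem_range, exists_prop]
      exact ⟨n, hn, j, hj, hxj⟩
    have hbxpos : 0 < b x := lt_of_le_of_ne (hbn x hxIoo) (Ne.symm hbx)
    have hSzx : S (z x) = S x := by
      have h1 := (hz x).2.1 x (le_refl x)
      have h2 : S (z x) ≤ S x := claimC x hxIoo.1 hxIoo.2.le (z x) (hz x).1
      linarith
    have hev : ∀ᶠ t in nhds x, 0 < b t := hb.continuousAt.eventually_const_lt hbxpos
    obtain ⟨δ₁, hδ₁, hball⟩ := Metric.eventually_nhds_iff.1 hev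
    set δ₀ := min (δ₁/2) ((ℓ n - x)/2) with hδ₀def
    have hδ₀0 : 0 < δ₀ := lt_min (by linarith) (by linarith [hxIoo.2])
    have hδ₀l : x + δ₀ ≤ ℓ n := by
      have := min_le_right (δ₁/2) ((ℓ n - x)/2); linarith [hxIoo.2]
    have hbpos' : ∀ t, x ≤ t → t ≤ x + δ₀ → 0 < b t := by
      intro t h1 h2
      apply hball
      rw [Real.dist_eq, abs_lt]
      have := min_le_left (δ₁/2) ((ℓ n - x)/2)
      constructor <;> linarith
    have hBtail : ∀ δ, 0 < δ → δ ≤ 1 →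
        ∃ c > 0, ∀ y ∈ Set.Icc (x+δ) (x+1), S y ≤ S x - c := by
      intro δ hδ _
      have hδ'0 : 0 < min δ δ₀ := lt_min hδ hδ₀0
      have hc : 0 < S x - S (x + min δ δ₀) := by
        have h := hintSub x (x + min δ δ₀)
        have hI : 0 < ∫ t in x..(x + min δ δ₀), b t :=
          intervalIntegral.intervalIntegral_pos_of_pos_on (hb.intervalIntegrable _ _)
            (fun t ht => hbpos' t ht.1.le (by linarith [ht.2.le, min_le_right δ δ₀]))
            (by linarith)
        linarith
      refine ⟨S x - S (x + min δ δ₀), hc, fun y hy => ?_⟩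
      have h1 : S y ≤ S (x + min δ δ₀) := by
        apply claimC (x + min δ δ₀) (by linarith [hxIoo.1])
          (by linarith [min_le_right δ δ₀]) y
        have := min_le_left δ δ₀
        linarith [hy.1]
      linarith
    have hle := lap_endpoint S b hb hScont x (fun y => hintSub x y) hbxpos hBtail
    have hG2 : G₂ x = 1/(b x) := by rw [hG₂Sig n hn x hxIoo, if_neg hbx]
    apply Filter.Tendsto.congr' ?_ hle
    filter_upwards [self_mem_nhdsWithin] with ε (hε : ε ∈ Set.Ioi 0)
    show (∫ y in x..(x+1), Real.exp ((S y - S x)/ε)) * b x / ε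
        = Real.exp ((S x - S (z x)) / ε) * πe ε x / (ε * G₂ x)
    rw [hπ ε x, hSzx, sub_self, zero_div, Real.exp_zero, one_mul, hG2,
      show ε * (1/(b x)) = ε / (b x) by ring, div_div_eq_mul_div]
end

section
/- Fix ε > 0 and A ∈ ℝ, and define a(ε) := (e^{B/ε} − 1)^{−1}·(1/ε)·∫₀¹ g(y) e^{−S(y)/ε} dy and f(x) := A + a(ε)·∫₀ˣ e^{S(y)/ε} dy + (1/ε)·∫₀ˣ e^{S(y)/ε} ( ∫₀ʸ g(z) e^{−S(z)/ε} dz ) dy for x ∈ [0,1]. Then f(1) = f(0), f′(1) = f′(0), and ε·f″(x) + b(x)·f′(x) = g(x) for all x ∈ (0,1); hence f extends to a 1-periodic C¹ (piecewise C²) function on ℝ solving the Poisson equation L_ε f = g on the torus, where (L_ε f)(θ) = b(θ) f′(θ) + ε f″(θ). -/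
/-- Explicit solution of the Poisson equation `L_ε f = g` on the
torus: the function `f` defined below satisfies `f 1 = f 0`, `f' 1 = f' 0`,
`ε f'' + b f' = g` on `(0,1)`, and extends to a `1`-periodic `C¹` function solving
the Poisson equation on all of `ℝ`. -/
theorem poisson_equation_solution
    (b : ℝ → ℝ) (hb : Continuous b) (hbper : ∀ x, b (x + 1) = b x)
    (B : ℝ) (hB : B = ∫ θ in (0:ℝ)..1, b θ) (hBpos : 0 < B)
    (S : ℝ → ℝ) (hS : ∀ x, S x = -∫ t in (0:ℝ)..x, b t)
    (g : ℝ → ℝ) (hg : Continuous g) (hgper : ∀ x, g (x + 1) = g x)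
    (ε : ℝ) (hε : 0 < ε)
    (hmean : (∫ θ in (0:ℝ)..1,
        g θ * ∫ y in θ..(θ + 1), Real.exp ((S y - S θ) / ε)) = 0)
    (A a : ℝ)
    (ha : a = (Real.exp (B / ε) - 1)⁻¹ * (1 / ε) *
        ∫ y in (0:ℝ)..1, g y * Real.exp (-(S y) / ε))
    (f : ℝ → ℝ)
    (hf : ∀ x, f x = A + a * (∫ y in (0:ℝ)..x, Real.exp (S y / ε))
        + (1 / ε) * ∫ y in (0:ℝ)..x,
            Real.exp (S y / ε) * ∫ t in (0:ℝ)..y, g t * Real.exp (-(S t) / ε)) :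
    f 1 = f 0 ∧ deriv f 1 = deriv f 0 ∧
    (∀ x ∈ Set.Ioo (0:ℝ) 1, ε * deriv (deriv f) x + b x * deriv f x = g x) ∧
    ∃ F : ℝ → ℝ, (∀ θ, F (θ + 1) = F θ) ∧ Set.EqOn F f (Set.Icc 0 1) ∧
      ContDiff ℝ 1 F ∧ (∀ θ, b θ * deriv F θ + ε * deriv (deriv F) θ = g θ) := by
  have hεne : ε ≠ 0 := hε.ne'
  set E : ℝ → ℝ := fun y => Real.exp (S y / ε) with hE_def
  set h : ℝ → ℝ := fun t => g t * Real.exp (-(S t) / ε) with hh_def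
  -- derivative of S
  have hSd : ∀ x, HasDerivAt S (-(b x)) x := by
    intro x
    have hfun : S = fun x => -∫ t in (0:ℝ)..x, b t := funext hS
    rw [hfun]
    exact ((hb.integral_hasStrictDerivAt 0 x).hasDerivAt).neg
  have hSc : Continuous S := by
    have : Differentiable ℝ S := fun x => (hSd x).differentiableAt
    exact this.continuous
  have hEc : Continuous E := Real.continuous_exp.comp (hSc.div_const ε)
  have hhc : Continuous h := hg.mul (Real.continuous_exp.comp ((hSc.neg).div_const ε))
  set P : ℝ → ℝ := fun x => ∫ y in (0:ℝ)..x, E y with hP_def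
  set G : ℝ → ℝ := fun x => ∫ t in (0:ℝ)..x, h t with hG_def
  have hPd : ∀ x, HasDerivAt P (E x) x := fun x =>
    (hEc.integral_hasStrictDerivAt 0 x).hasDerivAt
  have hGd : ∀ x, HasDerivAt G (h x) x := fun x =>
    (hhc.integral_hasStrictDerivAt 0 x).hasDerivAt
  have hPc : Continuous P := (Differentiable.continuous fun x => (hPd x).differentiableAt)
  have hGc : Continuous G := (Differentiable.continuous fun x => (hGd x).differentiableAt)
  -- E x * exp (-(S x)/ε) = 1
  have hEinv : ∀ x, E x * Real.exp (-(S x) / ε) = 1 := by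
    intro x
    rw [hE_def, ← Real.exp_add, show S x / ε + -(S x) / ε = 0 by ring, Real.exp_zero]
  have hEh : ∀ x, E x * h x = g x := by
    intro x
    have := hEinv x
    rw [hh_def]
    calc E x * (g x * Real.exp (-(S x) / ε)) = g x * (E x * Real.exp (-(S x) / ε)) := by ring
    _ = g x := by rw [this]; ring
  -- f as an explicit function
  have hffun : f = fun x => A + a * P x + (1/ε) * ∫ y in (0:ℝ)..x, E y * G y := funext hf
  set φ : ℝ → ℝ := fun x => a * E x + (1/ε) * (E x * G x) with hφ_def
  have hfd : ∀ x, HasDerivAt f (φ x) x := by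
    intro x
    rw [hffun]
    exact (((hPd x).const_mul a).const_add A).add
      ((((hEc.mul hGc).integral_hasStrictDerivAt 0 x).hasDerivAt).const_mul (1/ε))
  have hderivf : deriv f = φ := funext fun x => (hfd x).deriv
  -- derivative of E and φ
  have hEd : ∀ x, HasDerivAt E (E x * (-(b x) / ε)) x := fun x => ((hSd x).div_const ε).exp
  set ψ : ℝ → ℝ := fun x => a * (E x * (-(b x) / ε))
      + (1/ε) * (E x * (-(b x) / ε) * G x + E x * h x) with hψ_def
  have hφd : ∀ x, HasDerivAt φ (ψ x) x := by
    intro x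
    exact (((hEd x).const_mul a)).add ((((hEd x).mul (hGd x))).const_mul (1/ε))
  have hderivφ : deriv φ = ψ := funext fun x => (hφd x).deriv
  have hψc : Continuous ψ := by
    fun_prop
  -- ODE everywhere
  have hODE : ∀ x, ε * ψ x + b x * φ x = g x := by
    intro x
    calc ε * ψ x + b x * φ x = E x * h x := by
          rw [hψ_def, hφ_def]; field_simp; ring
    _ = g x := hEh x
  -- periodicity of S
  have hSper : ∀ x, S (x + 1) = S x - B := by
    intro x
    have h1 : (∫ t in (1:ℝ)..(x+1), b t) = ∫ t in (0:ℝ)..x, b t := by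
      have := intervalIntegral.integral_comp_add_right (a := (0:ℝ)) (b := x) b 1
      rw [zero_add] at this
      rw [← this]
      simp only [hbper]
    have h2 : (∫ t in (0:ℝ)..1, b t) + ∫ t in (1:ℝ)..(x+1), b t = ∫ t in (0:ℝ)..(x+1), b t :=
      intervalIntegral.integral_add_adjacent_intervals (hb.intervalIntegrable 0 1)
        (hb.intervalIntegrable 1 (x+1))
    rw [hS, ← h2, h1, hS, hB]; ring
  have hhper : ∀ x, h (x + 1) = Real.exp (B / ε) * h x := by
    intro x
    rw [hh_def]
    simp only [hgper, hSper]
    rw [show -(S x - B) / ε = B / ε + -(S x) / ε by ring, Real.exp_add]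
    ring
  have hEper : ∀ x, E (x + 1) = Real.exp (-B / ε) * E x := by
    intro x
    rw [hE_def]
    simp only [hSper]
    rw [show (S x - B) / ε = -B / ε + S x / ε by ring, Real.exp_add]
  have hGper : ∀ x, G (x + 1) = G 1 + Real.exp (B / ε) * G x := by
    intro x
    have h1 : (∫ t in (1:ℝ)..(x+1), h t) = Real.exp (B / ε) * ∫ t in (0:ℝ)..x, h t := by
      have := intervalIntegral.integral_comp_add_right (a := (0:ℝ)) (b := x) h 1
      rw [zero_add] at this
      rw [← this]
      simp only [hhper]
      rw [intervalIntegral.integral_const_mul]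
    have h2 : (∫ t in (0:ℝ)..1, h t) + ∫ t in (1:ℝ)..(x+1), h t = ∫ t in (0:ℝ)..(x+1), h t :=
      intervalIntegral.integral_add_adjacent_intervals (hhc.intervalIntegrable 0 1)
        (hhc.intervalIntegrable 1 (x+1))
    show (∫ t in (0:ℝ)..(x+1), h t)
      = (∫ t in (0:ℝ)..1, h t) + Real.exp (B / ε) * ∫ t in (0:ℝ)..x, h t
    rw [← h2, h1]
  -- exp facts
  have hexp1 : 1 < Real.exp (B / ε) := Real.one_lt_exp_iff.2 (by positivity)
  have hexpne : Real.exp (B / ε) - 1 ≠ 0 := by linarith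
  have hkey : G 1 = ε * a * (Real.exp (B / ε) - 1) := by
    have : a = (Real.exp (B / ε) - 1)⁻¹ * (1 / ε) * G 1 := ha
    field_simp at this
    linarith [this]
  -- φ is periodic
  have hφper : ∀ x, φ (x + 1) = φ x := by
    intro x
    rw [hφ_def]
    simp only [hEper, hGper, hkey]
    have hexpinv : Real.exp (-B / ε) * Real.exp (B / ε) = 1 := by
      rw [← Real.exp_add, show -B / ε + B / ε = 0 by ring, Real.exp_zero]
    field_simp
    rw [neg_div] at hexpinv
    linear_combination (E x * (a * ε + G x)) * hexpinv
  -- f 1 = f 0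
  have hIBP : (∫ y in (0:ℝ)..1, E y * G y + P y * h y) = P 1 * G 1 := by
    have := intervalIntegral.integral_deriv_mul_eq_sub_of_hasDerivAt
      (u := P) (v := G) (u' := E) (v' := h) (a := (0:ℝ)) (b := 1)
      (hPc.continuousOn) (hGc.continuousOn)
      (fun x _ => hPd x) (fun x _ => hGd x)
      (hEc.intervalIntegrable 0 1) (hhc.intervalIntegrable 0 1)
    simpa [hP_def, hG_def] using this
  have hsplit : (∫ y in (0:ℝ)..1, E y * G y)
      = P 1 * G 1 - ∫ y in (0:ℝ)..1, P y * h y := by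
    have hadd : (∫ y in (0:ℝ)..1, E y * G y + P y * h y)
        = (∫ y in (0:ℝ)..1, E y * G y) + ∫ y in (0:ℝ)..1, P y * h y :=
      intervalIntegral.integral_add ((hEc.mul hGc).intervalIntegrable 0 1)
        ((hPc.mul hhc).intervalIntegrable 0 1)
    rw [hadd] at hIBP
    linarith
  -- rewrite hmean
  have hpi : ∀ θ : ℝ, (∫ y in θ..(θ+1), Real.exp ((S y - S θ) / ε))
      = (P 1 - P θ + Real.exp (-B / ε) * P θ) * Real.exp (-(S θ) / ε) := by
    intro θ
    have e1 : (∫ y in θ..(θ+1), Real.exp ((S y - S θ) / ε))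
        = (∫ y in θ..(θ+1), E y) * Real.exp (-(S θ) / ε) := by
      rw [← intervalIntegral.integral_mul_const]
      congr 1
      funext y
      rw [hE_def, ← Real.exp_add]
      congr 1
      ring
    have e2 : (∫ y in θ..(1:ℝ), E y) = P 1 - P θ := by
      rw [hP_def]
      exact (intervalIntegral.integral_interval_sub_left (hEc.intervalIntegrable 0 1)
        (hEc.intervalIntegrable 0 θ)).symm
    have e3 : (∫ y in (1:ℝ)..(θ+1), E y) = Real.exp (-B / ε) * P θ := by
      have := intervalIntegral.integral_comp_add_right (a := (0:ℝ)) (b := θ) E 1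
      rw [zero_add] at this
      rw [← this]
      simp only [hEper]
      rw [intervalIntegral.integral_const_mul, hP_def]
    have e4 : (∫ y in θ..(1:ℝ), E y) + ∫ y in (1:ℝ)..(θ+1), E y = ∫ y in θ..(θ+1), E y :=
      intervalIntegral.integral_add_adjacent_intervals (hEc.intervalIntegrable θ 1)
        (hEc.intervalIntegrable 1 (θ+1))
    rw [e1, ← e4, e2, e3]
  have hmean2 : G 1 * P 1 + (Real.exp (-B / ε) - 1) * (∫ θ in (0:ℝ)..1, P θ * h θ) = 0 := by
    have hrw : (∫ θ in (0:ℝ)..1, g θ * ∫ y in θ..(θ + 1), Real.exp ((S y - S θ) / ε))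
        = ∫ θ in (0:ℝ)..1, (h θ * P 1 + (Real.exp (-B / ε) - 1) * (P θ * h θ)) := by
      congr 1
      funext θ
      rw [hpi θ, hh_def]
      ring
    rw [hrw] at hmean
    rw [intervalIntegral.integral_add (f := fun θ => h θ * P 1)
      (g := fun θ => (Real.exp (-B / ε) - 1) * (P θ * h θ)) ((hhc.mul continuous_const).intervalIntegrable 0 1)
      ((continuous_const.mul (hPc.mul hhc)).intervalIntegrable 0 1),
      intervalIntegral.integral_mul_const, intervalIntegral.integral_const_mul] at hmean
    rw [hG_def] at *
    linarith [hmean]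
  have hf10 : f 1 = f 0 := by
    rw [hffun]
    simp only
    rw [hsplit]
    have hP0 : P 0 = 0 := intervalIntegral.integral_same
    have hexpinv : Real.exp (-B / ε) * Real.exp (B / ε) = 1 := by
      rw [← Real.exp_add, show -B / ε + B / ε = 0 by ring, Real.exp_zero]
    have h1 : P 1 * G 1 = ε * a * (Real.exp (B / ε) - 1) * P 1 := by rw [hkey]; ring
    have hJ : (Real.exp (B / ε) - 1) * (∫ y in (0:ℝ)..1, P y * h y)
        = Real.exp (B / ε) * (P 1 * G 1) := by
      linear_combination (- Real.exp (B / ε)) * hmean2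
        + (∫ θ in (0:ℝ)..1, P θ * h θ) * hexpinv
    have h2' : (Real.exp (B / ε) - 1) * (∫ y in (0:ℝ)..1, P y * h y)
        = (Real.exp (B / ε) - 1) * (ε * a * Real.exp (B / ε) * P 1) := by
      linear_combination hJ + Real.exp (B / ε) * h1
    have h2 : (∫ y in (0:ℝ)..1, P y * h y) = ε * a * Real.exp (B / ε) * P 1 :=
      mul_left_cancel₀ hexpne h2'
    rw [h2, h1, hP0]
    simp only [intervalIntegral.integral_same]
    field_simp
    ring
  -- f is periodic
  have hfper : ∀ x, f (x + 1) = f x := by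
    intro x
    set d : ℝ → ℝ := fun x => f (x + 1) - f x with hd_def
    have hdd : ∀ y, HasDerivAt d 0 y := by
      intro y
      have h1 : HasDerivAt (fun x => f (x + 1)) (φ (y + 1)) y := by
        have := (hfd (y + 1)).comp y ((hasDerivAt_id y).add_const 1)
        rw [mul_one] at this
        exact this
      have := h1.sub (hfd y)
      rw [hφper y, sub_self] at this
      exact this
    have hconst : d x = d 0 :=
      is_const_of_deriv_eq_zero (fun y => (hdd y).differentiableAt)
        (fun y => (hdd y).deriv) x 0
    have hd0 : d 0 = 0 := by
      rw [hd_def]; simp only [zero_add]; rw [hf10]; ring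
    have := hconst.trans hd0
    simp only [hd_def, sub_eq_zero] at this
    exact this
  refine ⟨hf10, ?_, ?_, f, hfper, fun x _ => rfl, ?_, ?_⟩
  · rw [hderivf]
    have := hφper 0
    rw [zero_add] at this
    exact this
  · intro x _
    rw [hderivf, hderivφ]
    exact hODE x
  · rw [contDiff_one_iff_deriv]
    refine ⟨fun x => (hfd x).differentiableAt, ?_⟩
    rw [hderivf]
    fun_prop
  · intro θ
    rw [hderivf, hderivφ]
    have := hODE θ
    linarith [this]
end

section
/- For every ε > 0, Cap_ε(𝒜₁,𝒜₂) = ε·( h′((1+θ₁⁻)−)·m_ε(θ₁⁻) − h′(θ₁⁺+)·m_ε(θ₁⁺) ), where the one-sided derivatives of the equilibrium potential are h′((1+θ₁⁻)−) = e^{S(1+θ₁⁻)/ε} / ∫_{θ₂⁺}^{1+θ₁⁻} e^{S(y)/ε} dy and h′(θ₁⁺+) = − e^{S(θ₁⁺)/ε} / ∫_{θ₁⁺}^{θ₂⁻} e^{S(y)/ε} dy; equivalently, Cap_ε(𝒜₁,𝒜₂) = ε·( e^{S(1+θ₁⁻)/ε}·m_ε(θ₁⁻) / ∫_{θ₂⁺}^{1+θ₁⁻}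 e^{S(y)/ε} dy + e^{S(θ₁⁺)/ε}·m_ε(θ₁⁺) / ∫_{θ₁⁺}^{θ₂⁻} e^{S(y)/ε} dy ). -/
open MeasureTheory intervalIntegral Set

lemma contFTC {f : ℝ → ℝ} (hf : Continuous f) (a x : ℝ) :
    HasDerivAt (fun t => ∫ s in a..t, f s) (f x) x :=
  intervalIntegral.integral_hasDerivAt_right (hf.intervalIntegrable a x)
    (hf.stronglyMeasurableAtFilter _ _) hf.continuousAt


lemma intCongrIoo {f q : ℝ → ℝ} {a b : ℝ} (hab : a ≤ b)
    (h : ∀ x ∈ Set.Ioo a b, f x = q x) :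
    ∫ x in a..b, f x = ∫ x in a..b, q x := by
  apply intervalIntegral.integral_congr_ae
  have hne : ∀ᵐ (x : ℝ), x ≠ b := by
    rw [MeasureTheory.ae_iff]
    have : {x : ℝ | ¬ x ≠ b} = {b} := by ext x; simp
    rw [this]; exact measure_singleton b
  filter_upwards [hne] with x hx hxI
  rw [Set.uIoc_of_le hab] at hxI
  exact h x ⟨hxI.1, lt_of_le_of_ne hxI.2 hx⟩

lemma intIntegrableIoo {f q : ℝ → ℝ} {a b : ℝ} (hab : a ≤ b)
    (h : ∀ x ∈ Set.Ioo a b, f x = q x) (hq : Continuous q) :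
    IntervalIntegrable f volume a b := by
  rw [intervalIntegrable_iff]
  apply ((hq.integrableOn_uIoc (a := a) (b := b))).congr
  have hne : ∀ᵐ (x : ℝ), x ≠ b := by
    rw [MeasureTheory.ae_iff]
    have : {x : ℝ | ¬ x ≠ b} = {b} := by ext x; simp
    rw [this]; exact measure_singleton b
  rw [Filter.EventuallyEq, ae_restrict_iff' measurableSet_uIoc]
  filter_upwards [hne] with x hx hxI
  rw [Set.uIoc_of_le hab] at hxI
  exact (h x ⟨hxI.1, lt_of_le_of_ne hxI.2 hx⟩).symm

/-- The capacity between two disjoint arcs `𝒜₁ = [θ₁⁻, θ₁⁺]` and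
`𝒜₂ = [θ₂⁻, θ₂⁺]` equals
`ε (h'((1+θ₁⁻)-) m_ε(θ₁⁻) - h'(θ₁⁺+) m_ε(θ₁⁺))`, with explicit one-sided
derivatives of the equilibrium potential, equivalently the explicit sum of the two
ratios of exponential integrals. -/
theorem capacity_boundary_formula
    (b : ℝ → ℝ) (hb : Continuous b) (hbper : ∀ x, b (x + 1) = b x)
    (hB : 0 < ∫ θ in (0:ℝ)..1, b θ)
    (S : ℝ → ℝ) (hS : ∀ x, S x = -∫ t in (0:ℝ)..x, b t)
    (ε : ℝ) (hε : 0 < ε)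
    (πe : ℝ → ℝ) (hπ : ∀ x, πe x = ∫ y in x..(x + 1), Real.exp ((S y - S x) / ε))
    (c : ℝ) (hc : c = ∫ x in (0:ℝ)..1, πe x)
    (m : ℝ → ℝ) (hm : ∀ θ, m θ = πe θ / c)
    (θ1m θ1p θ2m θ2p : ℝ)
    (hord : 0 ≤ θ1m ∧ θ1m ≤ θ1p ∧ θ1p < θ2m ∧ θ2m ≤ θ2p ∧ θ2p < 1)
    (h : ℝ → ℝ)
    (hh1 : ∀ θ ∈ Set.Icc θ1m θ1p, h θ = 1)
    (hh0 : ∀ θ ∈ Set.Icc θ2m θ2p, h θ = 0)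
    (hhmid : ∀ θ ∈ Set.Icc θ1p θ2m, h θ
        = (∫ y in θ..θ2m, Real.exp (S y / ε)) / (∫ y in θ1p..θ2m, Real.exp (S y / ε)))
    (hhout : ∀ θ ∈ Set.Icc θ2p (1 + θ1m), h θ
        = (∫ y in θ2p..θ, Real.exp (S y / ε)) / (∫ y in θ2p..(1 + θ1m), Real.exp (S y / ε)))
    (hhper : ∀ θ, h (θ + 1) = h θ)
    (Cap : ℝ)
    (hCap : Cap = ε * ∫ θ in (0:ℝ)..1, (deriv h θ) ^ 2 * m θ) :
    Cap = ε * (derivWithin h (Set.Iic (1 + θ1m)) (1 + θ1m) * m θ1m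
        - derivWithin h (Set.Ici θ1p) θ1p * m θ1p) ∧
    derivWithin h (Set.Iic (1 + θ1m)) (1 + θ1m)
      = Real.exp (S (1 + θ1m) / ε) / (∫ y in θ2p..(1 + θ1m), Real.exp (S y / ε)) ∧
    derivWithin h (Set.Ici θ1p) θ1p
      = -(Real.exp (S θ1p / ε) / (∫ y in θ1p..θ2m, Real.exp (S y / ε))) ∧
    Cap = ε * (Real.exp (S (1 + θ1m) / ε) * m θ1m
          / (∫ y in θ2p..(1 + θ1m), Real.exp (S y / ε))
        + Real.exp (S θ1p / ε) * m θ1p / (∫ y in θ1p..θ2m, Real.exp (S y / ε))) := by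
  obtain ⟨ho0, ho1, ho2, ho3, ho4⟩ := hord
  set B : ℝ := ∫ θ in (0:ℝ)..1, b θ with hBdef
  set g : ℝ → ℝ := fun y => Real.exp (S y / ε) with hg
  have hSfun : S = fun x => -∫ t in (0:ℝ)..x, b t := funext hS
  have hSderiv : ∀ x, HasDerivAt S (-(b x)) x := by
    intro x; rw [hSfun]; exact (contFTC hb 0 x).neg
  have hScont : Continuous S := by
    rw [continuous_iff_continuousAt]; exact fun x => (hSderiv x).continuousAt
  have hgcont : Continuous g := (Real.continuous_exp).comp (hScont.div_const ε)
  have hgpos : ∀ y, 0 < g y := fun y => Real.exp_pos _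
  have hSper : ∀ y, S (y + 1) = S y - B := by
    intro y
    have hadd : (∫ t in (0:ℝ)..y, b t) + (∫ t in y..(y+1), b t) = ∫ t in (0:ℝ)..(y+1), b t :=
      intervalIntegral.integral_add_adjacent_intervals (hb.intervalIntegrable _ _)
        (hb.intervalIntegrable _ _)
    have hper : (∫ t in y..(y+1), b t) = B := by
      have := (Function.Periodic.intervalIntegral_add_eq (f := b) (T := 1) hbper y 0)
      simpa using this
    rw [hS (y+1), hS y, ← hadd, hper]; ring
  have hgper : ∀ y, g (y + 1) = Real.exp (-(B/ε)) * g y := by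
    intro y; rw [hg]; simp only
    rw [hSper y, ← Real.exp_add]; congr 1; field_simp; ring
  set κ : ℝ := Real.exp (-(B/ε)) - 1 with hκ
  set u : ℝ → ℝ := fun x => ∫ y in x..(x+1), g y with hu
  have huder : ∀ x, HasDerivAt u (κ * g x) x := by
    intro x
    have he : u = fun t => (∫ y in (0:ℝ)..(t+1), g y) - ∫ y in (0:ℝ)..t, g y := by
      funext t
      rw [hu]; simp only
      rw [intervalIntegral.integral_interval_sub_left (hgcont.intervalIntegrable _ _)
        (hgcont.intervalIntegrable _ _)]
    have h1 : HasDerivAt (fun t : ℝ => ∫ y in (0:ℝ)..(t+1), g y) (g (x+1)) x := by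
      have := (contFTC hgcont 0 (x+1)).comp x ((hasDerivAt_id x).add_const 1)
      simpa [Function.comp_def] using this
    have h3 := h1.sub (contFTC hgcont 0 x)
    rw [he]
    exact h3.congr_deriv (by rw [hgper x]; ring)
  have hucont : Continuous u := by
    rw [continuous_iff_continuousAt]; exact fun x => (huder x).continuousAt
  have hupos : ∀ x, 0 < u x := by
    intro x
    rw [hu]
    exact intervalIntegral.intervalIntegral_pos_of_pos (hgcont.intervalIntegrable _ _)
      hgpos (by linarith)
  have hπu : ∀ x, πe x = Real.exp (-(S x)/ε) * u x := by
    intro x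
    rw [hπ x]
    have : ∀ y, Real.exp ((S y - S x)/ε) = g y * Real.exp (-(S x)/ε) := by
      intro y; rw [hg]; simp only; rw [← Real.exp_add]; congr 1; field_simp; ring
    simp_rw [this]
    rw [intervalIntegral.integral_mul_const, hu]; ring
  have hgπ : ∀ x, g x * πe x = u x := by
    intro x
    rw [hπu x, hg]; simp only
    rw [← mul_assoc, ← Real.exp_add]
    have : S x / ε + -(S x)/ε = 0 := by field_simp; ring
    rw [this, Real.exp_zero, one_mul]
  have hπcont : Continuous πe := by
    have : πe = fun x => Real.exp (-(S x)/ε) * u x := funext hπu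
    rw [this]
    exact ((Real.continuous_exp).comp ((hScont.neg).div_const ε)).mul hucont
  have hπpos : ∀ x, 0 < πe x := by
    intro x; rw [hπu x]; exact mul_pos (Real.exp_pos _) (hupos x)
  have hcpos : 0 < c := by
    rw [hc]
    exact intervalIntegral.intervalIntegral_pos_of_pos (hπcont.intervalIntegrable _ _)
      hπpos one_pos
  have huper : ∀ x, u (x + 1) = Real.exp (-(B/ε)) * u x := by
    intro x
    have h1 : u (x+1) = ∫ y in x..(x+1), g (y+1) := by
      rw [intervalIntegral.integral_comp_add_right (fun y => g y) 1, hu]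
    rw [h1]
    simp_rw [hgper]
    rw [intervalIntegral.integral_const_mul, hu]
  have hπper : ∀ x, πe (x + 1) = πe x := by
    intro x
    rw [hπu (x+1), hπu x, huper x, hSper x, ← mul_assoc, ← Real.exp_add]
    congr 2; field_simp; ring
  have hmper : ∀ x, m (x + 1) = m x := by
    intro x; rw [hm, hm, hπper]
  -- constants
  set D1 : ℝ := ∫ y in θ1p..θ2m, g y with hD1
  set D2 : ℝ := ∫ y in θ2p..(1+θ1m), g y with hD2
  have hX : θ2p < 1 + θ1m := by linarith
  have hD1pos : 0 < D1 :=
    intervalIntegral.intervalIntegral_pos_of_pos (hgcont.intervalIntegrable _ _) hgpos ho2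
  have hD2pos : 0 < D2 :=
    intervalIntegral.intervalIntegral_pos_of_pos (hgcont.intervalIntegrable _ _) hgpos hX
  -- rewrite hhmid/hhout in terms of g, D1, D2
  have hhmid' : ∀ θ ∈ Set.Icc θ1p θ2m, h θ = (∫ y in θ..θ2m, g y) / D1 := hhmid
  have hhout' : ∀ θ ∈ Set.Icc θ2p (1+θ1m), h θ = (∫ y in θ2p..θ, g y) / D2 := hhout
  -- one-sided derivative at 1+θ1m within Iic
  have hdWA : derivWithin h (Set.Iic (1 + θ1m)) (1 + θ1m) = g (1+θ1m) / D2 := by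
    have hφ : HasDerivAt (fun t => (∫ y in θ2p..t, g y) / D2) (g (1+θ1m) / D2) (1+θ1m) :=
      (contFTC hgcont θ2p (1+θ1m)).div_const D2
    have heq : h =ᶠ[nhdsWithin (1+θ1m) (Set.Iic (1+θ1m))]
        (fun t => (∫ y in θ2p..t, g y) / D2) := by
      filter_upwards [mem_nhdsWithin_of_mem_nhds (Ioi_mem_nhds hX), self_mem_nhdsWithin]
        with t ht1 ht2
      exact hhout' t ⟨le_of_lt ht1, ht2⟩
    have hW : HasDerivWithinAt h (g (1+θ1m) / D2) (Set.Iic (1+θ1m)) (1+θ1m) :=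
      (hφ.hasDerivWithinAt).congr_of_eventuallyEq heq
        (hhout' _ ⟨le_of_lt hX, le_refl _⟩)
    exact hW.derivWithin (uniqueDiffOn_Iic _ _ Set.self_mem_Iic)
  -- one-sided derivative at θ1p within Ici
  have hdWB : derivWithin h (Set.Ici θ1p) θ1p = -(g θ1p / D1) := by
    have hψfun : (fun t => (∫ y in t..θ2m, g y) / D1)
        = fun t => (-(∫ y in θ2m..t, g y)) / D1 := by
      funext t; rw [intervalIntegral.integral_symm]
    have hψ : HasDerivAt (fun t => (∫ y in t..θ2m, g y) / D1) (-(g θ1p) / D1) θ1p := by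
      rw [hψfun]
      exact ((contFTC hgcont θ2m θ1p).neg).div_const D1
    have heq : h =ᶠ[nhdsWithin θ1p (Set.Ici θ1p)]
        (fun t => (∫ y in t..θ2m, g y) / D1) := by
      filter_upwards [mem_nhdsWithin_of_mem_nhds (Iio_mem_nhds ho2), self_mem_nhdsWithin]
        with t ht1 ht2
      exact hhmid' t ⟨ht2, le_of_lt ht1⟩
    have hW : HasDerivWithinAt h (-(g θ1p) / D1) (Set.Ici θ1p) θ1p :=
      (hψ.hasDerivWithinAt).congr_of_eventuallyEq heq
        (hhmid' _ ⟨le_refl _, le_of_lt ho2⟩)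
    rw [hW.derivWithin (uniqueDiffOn_Ici _ _ Set.self_mem_Ici)]; ring
  -- interior derivatives
  have hderC : ∀ θ ∈ Set.Ioo θ1p θ2m, deriv h θ = -(g θ / D1) := by
    intro θ hθ
    have hψfun : (fun t => (∫ y in t..θ2m, g y) / D1)
        = fun t => (-(∫ y in θ2m..t, g y)) / D1 := by
      funext t; rw [intervalIntegral.integral_symm]
    have hψ : HasDerivAt (fun t => (∫ y in t..θ2m, g y) / D1) (-(g θ) / D1) θ := by
      rw [hψfun]; exact ((contFTC hgcont θ2m θ).neg).div_const D1
    have heq : (fun t => (∫ y in t..θ2m, g y) / D1) =ᶠ[nhds θ] h := by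
      filter_upwards [Ioo_mem_nhds hθ.1 hθ.2] with t ht
      exact (hhmid' t ⟨le_of_lt ht.1, le_of_lt ht.2⟩).symm
    have := (hψ.congr_of_eventuallyEq heq.symm).deriv
    rw [this]; ring
  have hderD : ∀ θ ∈ Set.Ioo θ2p (1+θ1m), deriv h θ = g θ / D2 := by
    intro θ hθ
    have hφ : HasDerivAt (fun t => (∫ y in θ2p..t, g y) / D2) (g θ / D2) θ :=
      (contFTC hgcont θ2p θ).div_const D2
    have heq : (fun t => (∫ y in θ2p..t, g y) / D2) =ᶠ[nhds θ] h := by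
      filter_upwards [Ioo_mem_nhds hθ.1 hθ.2] with t ht
      exact (hhout' t ⟨le_of_lt ht.1, le_of_lt ht.2⟩).symm
    exact (hφ.congr_of_eventuallyEq heq.symm).deriv
  have hderE : ∀ θ ∈ Set.Ioo θ1m θ1p, deriv h θ = 0 := by
    intro θ hθ
    have heq : (fun _ : ℝ => (1:ℝ)) =ᶠ[nhds θ] h := by
      filter_upwards [Ioo_mem_nhds hθ.1 hθ.2] with t ht
      exact (hh1 t ⟨le_of_lt ht.1, le_of_lt ht.2⟩).symm
    exact ((hasDerivAt_const θ (1:ℝ)).congr_of_eventuallyEq heq.symm).deriv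
  have hderF : ∀ θ ∈ Set.Ioo θ2m θ2p, deriv h θ = 0 := by
    intro θ hθ
    have heq : (fun _ : ℝ => (0:ℝ)) =ᶠ[nhds θ] h := by
      filter_upwards [Ioo_mem_nhds hθ.1 hθ.2] with t ht
      exact (hh0 t ⟨le_of_lt ht.1, le_of_lt ht.2⟩).symm
    exact ((hasDerivAt_const θ (0:ℝ)).congr_of_eventuallyEq heq.symm).deriv
  have hderper : ∀ θ, deriv h (θ + 1) = deriv h θ := by
    intro θ
    have hfun : (fun x => h (x + 1)) = h := funext hhper
    rw [← deriv_comp_add_const h 1 θ, hfun]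
  have hc0 : c ≠ 0 := ne_of_gt hcpos
  have hD1ne : D1 ≠ 0 := ne_of_gt hD1pos
  have hD2ne : D2 ≠ 0 := ne_of_gt hD2pos
  have hmfun : m = fun θ => πe θ / c := funext hm
  have hmcont : Continuous m := by rw [hmfun]; exact hπcont.div_const c
  set Φ : ℝ → ℝ := fun θ => deriv h θ ^ 2 * m θ with hΦ
  set q1 : ℝ → ℝ := fun t => (g t / D1)^2 * m t with hq1
  set q2 : ℝ → ℝ := fun t => (g t / D2)^2 * m t with hq2
  have hq1cont : Continuous q1 := ((hgcont.div_const D1).pow 2).mul hmcont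
  have hq2cont : Continuous q2 := ((hgcont.div_const D2).pow 2).mul hmcont
  have hp1 : ∀ x ∈ Set.Ioo (0:ℝ) θ1m, Φ x = q2 (x+1) := by
    intro x hx
    have hx1 : x + 1 ∈ Set.Ioo θ2p (1+θ1m) := ⟨by linarith [hx.1], by linarith [hx.2]⟩
    rw [hΦ, hq2]; simp only
    rw [← hderper x, hderD _ hx1, hmper x]
  have hp2 : ∀ x ∈ Set.Ioo θ1m θ1p, Φ x = (fun _ : ℝ => (0:ℝ)) x := by
    intro x hx; rw [hΦ]; simp only; rw [hderE x hx]; ring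
  have hp3 : ∀ x ∈ Set.Ioo θ1p θ2m, Φ x = q1 x := by
    intro x hx; rw [hΦ, hq1]; simp only; rw [hderC x hx]; ring
  have hp4 : ∀ x ∈ Set.Ioo θ2m θ2p, Φ x = (fun _ : ℝ => (0:ℝ)) x := by
    intro x hx; rw [hΦ]; simp only; rw [hderF x hx]; ring
  have hp5 : ∀ x ∈ Set.Ioo θ2p 1, Φ x = q2 x := by
    intro x hx
    have hx1 : x ∈ Set.Ioo θ2p (1+θ1m) := ⟨hx.1, by linarith [hx.2]⟩
    rw [hΦ, hq2]; simp only; rw [hderD x hx1]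
  have hi1 : IntervalIntegrable Φ volume 0 θ1m :=
    intIntegrableIoo ho0 hp1 (hq2cont.comp (continuous_id.add continuous_const))
  have hi2 : IntervalIntegrable Φ volume θ1m θ1p := intIntegrableIoo ho1 hp2 continuous_const
  have hi3 : IntervalIntegrable Φ volume θ1p θ2m := intIntegrableIoo (le_of_lt ho2) hp3 hq1cont
  have hi4 : IntervalIntegrable Φ volume θ2m θ2p := intIntegrableIoo ho3 hp4 continuous_const
  have hi5 : IntervalIntegrable Φ volume θ2p 1 := intIntegrableIoo (le_of_lt ho4) hp5 hq2cont
  have hsum : (∫ θ in (0:ℝ)..θ1m, Φ θ) + (∫ θ in θ1m..θ1p, Φ θ) + (∫ θ in θ1p..θ2m, Φ θ)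
      + (∫ θ in θ2m..θ2p, Φ θ) + (∫ θ in θ2p..(1:ℝ), Φ θ) = ∫ θ in (0:ℝ)..1, Φ θ := by
    rw [intervalIntegral.integral_add_adjacent_intervals hi1 hi2,
      intervalIntegral.integral_add_adjacent_intervals (hi1.trans hi2) hi3,
      intervalIntegral.integral_add_adjacent_intervals ((hi1.trans hi2).trans hi3) hi4,
      intervalIntegral.integral_add_adjacent_intervals (((hi1.trans hi2).trans hi3).trans hi4) hi5]
  have hv1 : ∫ θ in (0:ℝ)..θ1m, Φ θ = ∫ θ in (1:ℝ)..(1+θ1m), q2 θ := by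
    rw [intCongrIoo ho0 hp1, intervalIntegral.integral_comp_add_right q2 1]
    norm_num [add_comm θ1m 1]
  have hv2 : ∫ θ in θ1m..θ1p, Φ θ = 0 := by
    rw [intCongrIoo ho1 hp2]; simp
  have hv3 : ∫ θ in θ1p..θ2m, Φ θ = ∫ θ in θ1p..θ2m, q1 θ := intCongrIoo (le_of_lt ho2) hp3
  have hv4 : ∫ θ in θ2m..θ2p, Φ θ = 0 := by
    rw [intCongrIoo ho3 hp4]; simp
  have hv5 : ∫ θ in θ2p..(1:ℝ), Φ θ = ∫ θ in θ2p..(1:ℝ), q2 θ := intCongrIoo (le_of_lt ho4) hp5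
  have hjoin : (∫ θ in θ2p..(1:ℝ), q2 θ) + (∫ θ in (1:ℝ)..(1+θ1m), q2 θ)
      = ∫ θ in θ2p..(1+θ1m), q2 θ :=
    intervalIntegral.integral_add_adjacent_intervals (hq2cont.intervalIntegrable _ _)
      (hq2cont.intervalIntegrable _ _)
  have hT0 : ∫ θ in (0:ℝ)..1, Φ θ
      = (∫ θ in θ1p..θ2m, q1 θ) + ∫ θ in θ2p..(1+θ1m), q2 θ := by
    rw [← hsum, hv1, hv2, hv3, hv4, hv5, ← hjoin]; ring
  -- FTC evaluation of ∫ g·u over an interval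
  have hgu_int : ∀ a e : ℝ, ∫ t in a..e, g t * u t
      = (∫ y in a..e, g y) * u e - κ * (∫ y in a..e, g y)^2/2 := by
    intro a e
    have hF : ∀ t ∈ Set.uIcc a e, HasDerivAt
        (fun s => (∫ y in a..s, g y) * u s - κ * (∫ y in a..s, g y)^2/2)
        (g t * u t) t := by
      intro t _
      have hH := contFTC hgcont a t
      have hd := (hH.mul (huder t)).sub (((hH.pow 2).const_mul κ).div_const 2)
      exact hd.congr_deriv (by push_cast; ring)
    have := intervalIntegral.integral_eq_sub_of_hasDerivAt hF
      ((hgcont.mul hucont).intervalIntegrable _ _)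
    rw [this]
    simp [intervalIntegral.integral_same]
  have hurel : u θ2m = u θ1p + κ * D1 := by
    have hF : ∀ t ∈ Set.uIcc θ1p θ2m, HasDerivAt u (κ * g t) t := fun t _ => huder t
    have h2 := intervalIntegral.integral_eq_sub_of_hasDerivAt hF
      ((continuous_const.mul hgcont).intervalIntegrable _ _)
    rw [intervalIntegral.integral_const_mul, ← hD1] at h2
    linarith
  have hq1gu : ∀ t, q1 t = (g t * u t) / (c * D1^2) := by
    intro t; simp only [hq1, hm]
    rw [← hgπ t]; field_simp
  have hq2gu : ∀ t, q2 t = (g t * u t) / (c * D2^2) := by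
    intro t; simp only [hq2, hm]
    rw [← hgπ t]; field_simp
  have hJ1 : ∫ θ in θ1p..θ2m, q1 θ = (D1 * u θ2m - κ * D1^2/2) / (c * D1^2) := by
    rw [intervalIntegral.integral_congr (g := fun t => (g t * u t) / (c * D1^2))
      (fun t _ => hq1gu t), intervalIntegral.integral_div, hgu_int θ1p θ2m, ← hD1]
  have hJ2 : ∫ θ in θ2p..(1+θ1m), q2 θ = (D2 * u (1+θ1m) - κ * D2^2/2) / (c * D2^2) := by
    rw [intervalIntegral.integral_congr (g := fun t => (g t * u t) / (c * D2^2))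
      (fun t _ => hq2gu t), intervalIntegral.integral_div, hgu_int θ2p (1+θ1m), ← hD2]
  have hT : ∫ θ in (0:ℝ)..1, Φ θ = u θ1p / (c * D1) + u (1+θ1m) / (c * D2) := by
    rw [hT0, hJ1, hJ2, hurel]
    field_simp
    ring
  -- final assembly
  have hgx : ∀ x, Real.exp (S x / ε) = g x := fun _ => rfl
  have hm1 : g (1+θ1m) * m θ1m = u (1+θ1m) / c := by
    have hπ1 : πe θ1m = πe (1+θ1m) := by rw [add_comm]; exact (hπper θ1m).symm
    rw [hm, hπ1, ← hgπ (1+θ1m)]; ring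
  have hm2 : g θ1p * m θ1p = u θ1p / c := by rw [hm, ← hgπ θ1p]; ring
  have hC4 : Cap = ε * (g (1+θ1m) * m θ1m / D2 + g θ1p * m θ1p / D1) := by
    rw [hCap, hT, hm1, hm2]; ring
  simp only [hgx]
  refine ⟨?_, hdWA, hdWB, hC4⟩
  rw [hdWA, hdWB, hC4]; ring
end
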